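/- arXiv:1910.11989 — 9 statements merged into one kernel-verified Lean document; each statement's English description precedes it below -/
import Mathlib

section
/- Let p be a prime, n ≥ 1, and b ∈ F_{p^n} with Tr_{F_{p^n}/F_p}(b) ≠ 0. The map f_b(x) = x + (x^p - x + b)^{-1} fails to be a permutation of F_{p^n} if and only if the polynomial F(X,Y) = (X^p - X + b)^2 + (Y^p - Y)(X^p - X + b) + 1 - Y^{p-1} has a zero (x,y) ∈ F_{p^n}^2 with y ≠ 0. -/
section aux
variable (p : ℕ) [Fact p.Prime] (n : ℕ)

private lemma trace_pow_p (x : GaloisField p n) :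
    Algebra.trace (ZMod p) (GaloisField p n) (x ^ p) = Algebra.trace (ZMod p) (GaloisField p n) x := by
  let e : GaloisField p n ≃ₐ[ZMod p] GaloisField p n :=
    AlgEquiv.ofRingEquiv (f := frobeniusEquiv (GaloisField p n) p) (fun c => by
      rw [frobeniusEquiv_def, ← map_pow, ZMod.pow_card])
  have := Algebra.trace_eq_of_algEquiv e x
  simpa [e, AlgEquiv.ofRingEquiv, frobeniusEquiv_def, frobenius_def] using this

private lemma denom_ne {b : GaloisField p n}
    (hb : Algebra.trace (ZMod p) (GaloisField p n) b ≠ 0) (x : GaloisField p n) :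
    x ^ p - x + b ≠ 0 := by
  intro h
  apply hb
  have : b = x - x ^ p := by linear_combination h
  rw [this, map_sub, trace_pow_p, sub_self]

end aux

theorem stmt_2 (p : ℕ) [Fact p.Prime] (n : ℕ) (hn : 1 ≤ n)
    (b : GaloisField p n)
    (hb : Algebra.trace (ZMod p) (GaloisField p n) b ≠ 0) :
    ¬ Function.Bijective (fun x : GaloisField p n => x + (x ^ p - x + b)⁻¹) ↔
      ∃ x y : GaloisField p n, y ≠ 0 ∧
        (x ^ p - x + b) ^ 2 + (y ^ p - y) * (x ^ p - x + b) + 1 - y ^ (p - 1) = 0 := by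
  have hp : p.Prime := Fact.out
  have hp1 : p - 1 + 1 = p := Nat.succ_pred_eq_of_pos hp.pos
  have hd := denom_ne p n hb
  constructor
  · intro hnb
    rw [Finite.injective_iff_bijective.symm] at hnb
    simp only [Function.Injective, not_forall] at hnb
    obtain ⟨x₁, x₂, hf, hne⟩ := hnb
    set u := x₁ ^ p - x₁ + b with hu
    set v := x₂ ^ p - x₂ + b with hv
    have hune : u ≠ 0 := hd x₁
    have hvne : v ≠ 0 := hd x₂
    set d := x₁ - x₂ with hdd
    have hdne : d ≠ 0 := sub_ne_zero.mpr hne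
    have hsub : u - v = d ^ p - d := by
      rw [hu, hv, hdd, sub_pow_char]; ring
    have h1 : u⁻¹ - v⁻¹ = -d := by
      have hf' : x₁ + u⁻¹ = x₂ + v⁻¹ := hf
      linear_combination hf'
    have hkey : d * u * v = d ^ p - d := by
      rw [← hsub]
      field_simp at h1
      linear_combination h1
    refine ⟨x₁, -d, neg_ne_zero.mpr hdne, ?_⟩
    have hneg : (-d) ^ p = -(d ^ p) := by
      rw [show -d = 0 - d by ring, sub_pow_char, zero_pow hp.ne_zero, zero_sub]
    apply mul_left_cancel₀ (neg_ne_zero.mpr hdne)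
    have hpow : (-d) * (-d) ^ (p - 1) = (-d) ^ p := by
      rw [← pow_succ', hp1]
    have hv' : v = u - (d ^ p - d) := by linear_combination -hsub
    rw [hv'] at hkey
    calc (-d) * (u ^ 2 + ((-d) ^ p - -d) * u + 1 - (-d) ^ (p - 1))
        = (-d) * (u ^ 2 + ((-d) ^ p - -d) * u + 1) - ((-d) * (-d) ^ (p-1)) := by ring
      _ = 0 := by rw [hpow, hneg]; linear_combination -hkey
      _ = -d * 0 := by ring
  · rintro ⟨x, y, hy, hF⟩
    intro hbij
    set u := x ^ p - x + b with hu
    have hune : u ≠ 0 := hd x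
    set e := y ^ p - y with he
    have hpow : y * y ^ (p - 1) = y ^ p := by rw [← pow_succ', hp1]
    have hrel : y * u * (u + e) = e := by
      linear_combination y * hF + hpow - he
    have hx2 : (x + y) ^ p - (x + y) + b = u + e := by
      rw [add_pow_char, hu, he]; ring
    have hne2 : x ≠ x + y := by
      intro h; exact hy (by linear_combination -h)
    have hue : u + e ≠ 0 := by rw [← hx2]; exact hd (x + y)
    apply hne2
    apply hbij.injective
    show x + (x ^ p - x + b)⁻¹ = (x + y) + ((x + y) ^ p - (x + y) + b)⁻¹
    rw [hx2, ← hu]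
    field_simp
    linear_combination -hrel
end

section
/- Let p > 3 be prime. The polynomial Y^{p+1} - Y^2 + 4 ∈ F_p[Y] is squarefree, i.e., it has no multiple roots in the algebraic closure of F_p. -/
open Polynomial

theorem stmt_3 (p : ℕ) [Fact p.Prime] (hp : 3 < p) :
    Squarefree ((X ^ (p + 1) - X ^ 2 + 4 : (ZMod p)[X]).map
      (algebraMap (ZMod p) (AlgebraicClosure (ZMod p)))) := by
  have hpp := (Fact.out : p.Prime)
  set K := AlgebraicClosure (ZMod p)
  refine Polynomial.Separable.squarefree (Polynomial.Separable.map ?_)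
  rw [Polynomial.Separable]
  rw [Polynomial.isCoprime_iff_aeval_ne_zero_of_isAlgClosed (ZMod p) K]
  intro a
  by_contra h
  push_neg at h
  obtain ⟨h1, h2⟩ := h
  simp [derivative_X_pow, map_ofNat] at h1 h2
  have hap : a ^ p = 2 * a := by linear_combination h2
  have ha2 : a ^ 2 = -4 := by linear_combination h1 - a * hap
  have h4 : (4 : K) ^ p = 4 := by
    rw [show (4 : K) = algebraMap (ZMod p) K 4 from (map_ofNat _ 4).symm, ← map_pow,
      ZMod.pow_card, map_ofNat]
  have e1 : (a ^ 2) ^ p = -4 := by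
    rw [ha2, Odd.neg_pow (hpp.odd_of_ne_two (by omega)), h4]
  have e2 : (a ^ 2) ^ p = -16 := by
    calc (a ^ 2) ^ p = (a ^ p) ^ 2 := by ring
      _ = (2 * a) ^ 2 := by rw [hap]
      _ = 4 * a ^ 2 := by ring
      _ = -16 := by rw [ha2]; ring
  have h12 : ((12 : ℕ) : K) = 0 := by push_cast; linear_combination e2 - e1
  have hdvd : p ∣ 12 := (CharP.cast_eq_zero_iff K p 12).mp h12
  have hle : p ≤ 3 := by
    rcases hpp.dvd_mul.mp (show p ∣ 2 ^ 2 * 3 from hdvd) with h | h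
    · exact le_trans (Nat.le_of_dvd two_pos (hpp.dvd_of_dvd_pow h)) (by norm_num)
    · exact Nat.le_of_dvd (by norm_num) h
  omega
end

section
/- Let p > 3 be prime. The polynomial (Y^{p-1} - 1)·(Y^2·(Y^{p-1} - 1) + 4) ∈ F_p[Y] has no multiple roots in the algebraic closure of F_p. -/
open Polynomial

private lemma aux_ndvd12 (p : ℕ) (hpr : p.Prime) (hp : 3 < p) : ¬ p ∣ 12 := by
  intro h
  have h2 := Nat.le_of_dvd (by norm_num) h
  interval_cases p <;> revert h hpr <;> decide

theorem stmt_4 (p : ℕ) [Fact p.Prime] (hp : 3 < p) :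
    Squarefree ((((X ^ (p - 1) - 1) * (X ^ 2 * (X ^ (p - 1) - 1) + 4)) : (ZMod p)[X]).map
      (algebraMap (ZMod p) (AlgebraicClosure (ZMod p)))) := by
  have hpr : p.Prime := Fact.out
  have hd12 : ¬ p ∣ 12 := aux_ndvd12 p hpr hp
  set K := AlgebraicClosure (ZMod p) with hK
  have hcast : ∀ n : ℕ, ¬ p ∣ n → (n : K) ≠ 0 := fun n h => by
    rwa [Ne, CharP.cast_eq_zero_iff K p n]
  have h4 : (4 : K) ≠ 0 := by
    simpa using hcast 4 (fun h => hd12 (h.trans (by norm_num)))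
  have h12 : (12 : K) ≠ 0 := by simpa using hcast 12 hd12
  rw [← PerfectField.separable_iff_squarefree, Polynomial.map_mul]
  have e1 : ((X ^ (p - 1) - 1 : (ZMod p)[X]).map (algebraMap (ZMod p) K))
      = X ^ (p - 1) - 1 := by
    simp
  have e2 : ((X ^ 2 * (X ^ (p - 1) - 1) + 4 : (ZMod p)[X]).map (algebraMap (ZMod p) K))
      = X ^ (p + 1) - X ^ 2 + 4 := by
    have h2p : 2 + (p - 1) = p + 1 := by omega
    simp [mul_sub, ← pow_add, h2p, Polynomial.map_ofNat]
  rw [e1, e2]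
  have sep1 : (X ^ (p - 1) - 1 : K[X]).Separable := by
    have hn : ¬ p ∣ (p - 1) := by
      intro h
      rcases Nat.eq_zero_of_dvd_of_lt h (by omega) with h'
      omega
    simpa using separable_X_pow_sub_C' p (p - 1) (1 : K) hn one_ne_zero
  have sep2 : (X ^ (p + 1) - X ^ 2 + 4 : K[X]).Separable := by
    rw [Polynomial.separable_def]
    have hder : derivative (X ^ (p + 1) - X ^ 2 + 4 : K[X]) = X ^ p - 2 * X := by
      have hp1 : ((p : K) + 1) = 1 := by
        simp [CharP.cast_eq_zero K p]
      have hC2 : (C (2 : K)) = 2 := by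
        rw [show (2 : K) = ((2 : ℕ) : K) by norm_num, Polynomial.C_eq_natCast]
        norm_num
      simp [derivative_X_pow, hp1, hC2, one_add_one_eq_two]
    rw [hder, Polynomial.isCoprime_iff_aeval_ne_zero_of_isAlgClosed (k := K) K]
    intro a
    by_contra hc
    push_neg at hc
    obtain ⟨h1, h2⟩ := hc
    simp only [map_add, map_sub, map_pow, map_mul, aeval_X, map_ofNat] at h1 h2
    have ha2 : a ^ 2 = -4 := by linear_combination h1 - a * h2
    have key : (a ^ p) ^ 2 = ((-4 : K)) ^ p := by
      rw [← pow_mul, mul_comm, pow_mul, ha2]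
    have hm4 : ((-4 : K)) ^ p = -4 := by
      have hφ : (-4 : K) = algebraMap (ZMod p) K (-4 : ZMod p) := by
        simp [map_neg, map_ofNat]
      rw [hφ, ← map_pow, ZMod.pow_card]
    rw [hm4] at key
    have hap : a ^ p = 2 * a := by linear_combination h2
    rw [hap] at key
    have : (12 : K) = 0 := by linear_combination 4 * ha2 - key
    exact h12 this
  refine sep1.mul sep2 ?_
  rw [Polynomial.isCoprime_iff_aeval_ne_zero_of_isAlgClosed (k := K) K]
  intro a
  by_contra hc
  push_neg at hc
  obtain ⟨h1, h2⟩ := hc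
  simp only [map_add, map_sub, map_pow, map_one, aeval_X, map_ofNat] at h1 h2
  have hsplit : a ^ (p + 1) = a ^ 2 * a ^ (p - 1) := by
    rw [← pow_add]; congr 1; omega
  have : (4 : K) = 0 := by linear_combination h2 - hsplit - a ^ 2 * h1
  exact h4 this
end

section
/- Let p > 3 be prime and let K be the algebraic closure of F_p. There is no rational function A ∈ K(Y) satisfying A^p · ((Y^{p-1} - 1)(Y^2(Y^{p-1} - 1) + 4))^{(p-1)/2} - 2A - 1 = 0. -/
open RatFunc

lemma rm_pow {K : Type*} [Field K] (f : Polynomial K) (hf : f ≠ 0) (c : K) (n : ℕ) :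
    Polynomial.rootMultiplicity c (f ^ n) = n * Polynomial.rootMultiplicity c f := by
  induction n with
  | zero => simp [Polynomial.rootMultiplicity_eq_zero, Polynomial.IsRoot]
  | succ n ih =>
      rw [pow_succ, Polynomial.rootMultiplicity_mul (mul_ne_zero (pow_ne_zero _ hf) hf), ih]
      ring

set_option maxHeartbeats 1600000 in
theorem stmt_5 (p : ℕ) [Fact p.Prime] (hp : 3 < p) :
    ¬ ∃ A : RatFunc (AlgebraicClosure (ZMod p)),
      A ^ p * ((X ^ (p - 1) - 1) * (X ^ 2 * (X ^ (p - 1) - 1) + 4)) ^ ((p - 1) / 2)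
        - 2 * A - 1 = 0 := by
  rintro ⟨A, h⟩
  have hprime : p.Prime := Fact.out
  have hp5 : 5 ≤ p := by
    rcases Nat.lt_or_ge p 5 with h5 | h5
    · interval_cases p <;> simp_all (config := {decide := true})
    · exact h5
  obtain ⟨q, rfl⟩ : ∃ q, p = q + 1 := ⟨p - 1, by omega⟩
  have hq4 : 4 ≤ q := by omega
  have hqeven : q % 2 = 0 := by
    have h2 := hprime.odd_of_ne_two (by omega)
    rw [Nat.odd_iff] at h2
    omega
  set K := AlgebraicClosure (ZMod (q + 1)) with hK
  haveI hcharP : CharP K (q + 1) := by infer_instance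
  haveI : ExpChar K (q + 1) := by infer_instance
  have h4K : (4 : K) ≠ 0 := by
    intro h0
    rw [show (4 : K) = ((4 : ℕ) : K) by norm_num, CharP.cast_eq_zero_iff K (q + 1)] at h0
    have := Nat.le_of_dvd (by norm_num) h0
    omega
  have h2K : (2 : K) ≠ 0 := by
    intro h0
    rw [show (2 : K) = ((2 : ℕ) : K) by norm_num, CharP.cast_eq_zero_iff K (q + 1)] at h0
    have := Nat.le_of_dvd (by norm_num) h0
    omega
  have h3K : (3 : K) ≠ 0 := by
    intro h0
    rw [show (3 : K) = ((3 : ℕ) : K) by norm_num, CharP.cast_eq_zero_iff K (q + 1)] at h0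
    have := Nat.le_of_dvd (by norm_num) h0
    omega
  simp only [Nat.add_sub_cancel] at h
  set m := q / 2 with hm
  set f := A.num with hfdef
  set g := A.denom with hgdef
  have hg0 : g ≠ 0 := A.denom_ne_zero
  have hG0 : algebraMap (Polynomial K) (RatFunc K) g ≠ 0 := RatFunc.algebraMap_ne_zero hg0
  have hFA : algebraMap (Polynomial K) (RatFunc K) f
      = A * algebraMap (Polynomial K) (RatFunc K) g :=
    (div_eq_iff hG0).mp (RatFunc.num_div_denom A)
  set Cp : Polynomial K :=
    (Polynomial.X ^ q - 1) * (Polynomial.X ^ 2 * (Polynomial.X ^ q - 1) + 4) with hCpdef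
  have key : f ^ (q + 1) * Cp ^ m = 2 * f * g ^ q + g ^ (q + 1) := by
    apply RatFunc.algebraMap_injective K
    simp only [map_mul, map_pow, map_add, map_sub, map_one, map_ofNat,
      RatFunc.algebraMap_X, hCpdef]
    rw [hFA]
    linear_combination (algebraMap (Polynomial K) (RatFunc K) g) ^ (q + 1) * h
  have hCp0 : Cp ≠ 0 := by
    intro h0
    have := congrArg (Polynomial.eval 0) h0
    simp [hCpdef, zero_pow (by omega : q ≠ 0)] at this
    exact h4K this
  have hf0 : f ≠ 0 := by
    intro h0
    rw [h0] at key
    simp [zero_pow (by omega : q + 1 ≠ 0)] at key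
    exact hg0 (pow_eq_zero_iff (by omega : q + 1 ≠ 0) |>.mp key.symm)
  have hg1 : g = 1 := by
    by_contra hne
    have hdeg : g.natDegree ≠ 0 := fun hd =>
      hne ((RatFunc.monic_denom A).natDegree_eq_zero.mp hd)
    obtain ⟨c, hc⟩ := IsAlgClosed.exists_root g (by
      intro hd
      exact hdeg (by simp [Polynomial.natDegree_eq_zero_iff_degree_le_zero, hd.le]))
    have hfc : Polynomial.eval c f ≠ 0 := by
      obtain ⟨u, v, huv⟩ := RatFunc.isCoprime_num_denom A
      intro h0
      have := congrArg (Polynomial.eval c) huv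
      simp [h0, hc.eq_zero, ← hfdef, ← hgdef] at this
    have h2fg : 2 * f + g ≠ 0 := by
      intro h0
      have hz : f ^ (q + 1) * Cp ^ m = 0 := by
        rw [key]; linear_combination g ^ q * h0
      exact (mul_ne_zero (pow_ne_zero _ hf0) (pow_ne_zero _ hCp0)) hz
    have hrw : f ^ (q + 1) * Cp ^ m = g ^ q * (2 * f + g) := by rw [key]; ring
    have e1 := congrArg (Polynomial.rootMultiplicity c) hrw
    rw [Polynomial.rootMultiplicity_mul
        (mul_ne_zero (pow_ne_zero _ hf0) (pow_ne_zero _ hCp0)),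
      Polynomial.rootMultiplicity_mul
        (mul_ne_zero (pow_ne_zero _ hg0) h2fg),
      rm_pow _ hf0, rm_pow _ hCp0, rm_pow _ hg0,
      Polynomial.rootMultiplicity_eq_zero hfc] at e1
    have hrg : 1 ≤ Polynomial.rootMultiplicity c g :=
      (Polynomial.rootMultiplicity_pos hg0).mpr hc
    have hrc2 : 2 ≤ Polynomial.rootMultiplicity c Cp := by
      by_contra hlt
      push_neg at hlt
      have hb1 : m * Polynomial.rootMultiplicity c Cp ≤ m * 1 :=
        Nat.mul_le_mul_left m (by omega)
      have hb2 : q * 1 ≤ q * Polynomial.rootMultiplicity c g :=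
        Nat.mul_le_mul_left q hrg
      omega
    have hdvd : (Polynomial.X - Polynomial.C c) ^ 2 ∣ Cp :=
      dvd_trans (pow_dvd_pow _ hrc2) (Polynomial.pow_rootMultiplicity_dvd Cp c)
    obtain ⟨r, hr⟩ := hdvd
    have hev : Polynomial.eval c Cp = 0 := by
      rw [hr]; simp
    have hev2 : Polynomial.eval c (Polynomial.derivative Cp) = 0 := by
      rw [hr]
      simp [Polynomial.derivative_mul, Polynomial.derivative_pow]
    rw [hCpdef] at hev hev2
    simp only [Polynomial.derivative_mul, Polynomial.derivative_sub, Polynomial.derivative_add,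
      Polynomial.derivative_X_pow, Polynomial.derivative_one, Polynomial.derivative_ofNat,
      Polynomial.eval_mul, Polynomial.eval_add, Polynomial.eval_sub, Polynomial.eval_pow,
      Polynomial.eval_X, Polynomial.eval_one, Polynomial.eval_ofNat, Polynomial.eval_natCast,
      Polynomial.eval_C, Polynomial.eval_zero] at hev hev2
    have hqK : ((q : ℕ) : K) = -1 := by
      have h0 := CharP.cast_eq_zero K (q + 1)
      push_cast at h0
      linear_combination h0
    set s := c ^ (q - 1) with hsdef
    have hs : c ^ q = s * c := by
      rw [hsdef, ← pow_succ, Nat.sub_add_cancel (by omega : 1 ≤ q)]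
    rw [hqK, hs] at hev2
    rw [hs] at hev
    have hev2' : (-s) * (c ^ 2 * (s * c - 1) + 4)
        + (s * c - 1) * (2 * c * (s * c - 1) - c ^ 2 * s) = 0 := by
      linear_combination hev2
    rcases mul_eq_zero.mp hev with h1 | h1
    · have h4s : (4 : K) * s = 0 := by
        linear_combination -hev2' + (2 * c * (s * c - 1) - 2 * s * c ^ 2) * h1
      have hs0 : s = 0 := by
        rcases mul_eq_zero.mp h4s with h' | h'
        · exact absurd h' h4K
        · exact h'
      exact one_ne_zero (by linear_combination -h1 + c * hs0 : (1 : K) = 0)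
    · have hc0 : c ≠ 0 := by
        intro h0
        rw [h0] at h1
        simp at h1
        exact h4K h1
      have h5 : (s * c - 1) * (2 * c * (s * c - 1) - c ^ 2 * s) = 0 := by
        linear_combination hev2' + s * h1
      rcases mul_eq_zero.mp h5 with h6 | h6
      · exact h4K (by linear_combination h1 - c ^ 2 * h6)
      · have h7 : 2 * (s * c - 1) - c * s = 0 := by
          rcases mul_eq_zero.mp (show c * (2 * (s * c - 1) - c * s) = 0 by
            linear_combination h6) with h' | h'
          · exact absurd h' hc0
          · exact h'
        have h8 : s * c = 2 := by linear_combination h7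
        have h9 : c ^ 2 = -4 := by linear_combination h1 - c ^ 2 * h8
        have hfrob : (2 : K) ^ (q + 1) = 2 := by
          have hh := add_pow_char (1 : K) 1 (q + 1)
          rw [one_pow, one_add_one_eq_two] at hh
          exact hh
        have h2q : (2 : K) ^ q = 1 := by
          have hh : (2 : K) ^ q * 2 = 1 * 2 := by
            rw [← pow_succ, hfrob, one_mul]
          exact mul_right_cancel₀ h2K hh
        have h10 : ((-4 : K)) ^ q = 4 := by
          rw [← h9, pow_right_comm, hs, h8]
          norm_num
        have h11 : ((-4 : K)) ^ q = 1 := by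
          rw [show ((-4 : K)) = (-1) * 4 by norm_num, mul_pow,
            Even.neg_one_pow (Nat.even_iff.mpr hqeven), one_mul,
            show ((4 : K)) = 2 ^ 2 by norm_num, ← pow_mul, mul_comm 2 q, pow_mul, h2q]
          norm_num
        exact h3K (by linear_combination h11 - h10)
  -- now g = 1, degree contradiction
  rw [hg1] at key
  simp only [one_pow, mul_one] at key
  have h2f1 : 2 * f + 1 ≠ 0 := by
    intro h0
    rw [h0] at key
    exact (mul_ne_zero (pow_ne_zero _ hf0) (pow_ne_zero _ hCp0)) key
  have hD0 : (Polynomial.X ^ q - 1 : Polynomial K) ≠ 0 := by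
    intro h0
    have := congrArg (Polynomial.eval 0) h0
    simp [zero_pow (by omega : q ≠ 0)] at this
  have hE0 : (Polynomial.X ^ 2 * (Polynomial.X ^ q - 1) + 4 : Polynomial K) ≠ 0 := by
    intro h0
    have := congrArg (Polynomial.eval 0) h0
    simp [zero_pow (by omega : q ≠ 0)] at this
    exact h4K this
  have hD : (Polynomial.X ^ q - 1 : Polynomial K).natDegree = q := by
    rw [show (Polynomial.X ^ q - 1 : Polynomial K)
      = Polynomial.X ^ q - Polynomial.C 1 by rw [Polynomial.C_1]]
    exact Polynomial.natDegree_X_pow_sub_C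
  have hE : (Polynomial.X ^ 2 * (Polynomial.X ^ q - 1) + 4 : Polynomial K).natDegree = q + 2 := by
    rw [show (Polynomial.X ^ 2 * (Polynomial.X ^ q - 1) + 4 : Polynomial K)
      = Polynomial.X ^ (q + 2) - (Polynomial.X ^ 2 - 4) by ring]
    rw [Polynomial.natDegree_sub_eq_left_of_natDegree_lt, Polynomial.natDegree_X_pow]
    calc (Polynomial.X ^ 2 - 4 : Polynomial K).natDegree
        ≤ max (Polynomial.X ^ 2 : Polynomial K).natDegree (4 : Polynomial K).natDegree :=
          Polynomial.natDegree_sub_le _ _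
      _ < (Polynomial.X ^ (q + 2) : Polynomial K).natDegree := by
          simp [Polynomial.natDegree_X_pow]; omega
  have hCdeg : Cp.natDegree = 2 * q + 2 := by
    rw [hCpdef, Polynomial.natDegree_mul hD0 hE0, hD, hE]
    ring
  have hdegs := congrArg Polynomial.natDegree key
  rw [Polynomial.natDegree_mul (pow_ne_zero _ hf0) (pow_ne_zero _ hCp0),
    Polynomial.natDegree_pow, Polynomial.natDegree_pow, hCdeg] at hdegs
  have hle : (2 * f + 1 : Polynomial K).natDegree ≤ f.natDegree := by
    refine le_trans (Polynomial.natDegree_add_le _ _) ?_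
    simp only [Polynomial.natDegree_one, max_le_iff]
    constructor
    · exact le_trans (Polynomial.natDegree_mul_le) (by simp)
    · omega
  rw [← hdegs] at hle
  have hm2 : 2 ≤ m := by omega
  nlinarith [hle, hm2, hq4]
end

section
/- Let p > 3 be prime and let Δ be an element of an extension of the rational function field K(Y) (K = algebraic closure of F_p) with Δ^2 = (Y^{p-1} - 1)(Y^2(Y^{p-1} - 1) + 4). Then Δ ∉ K(Y); i.e., (Y^{p-1} - 1)(Y^2(Y^{p-1} - 1) + 4) is not a square in K(Y). -/
open RatFunc

theorem stmt_7 (p : ℕ) [Fact p.Prime] (hp : 3 < p) :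
    ¬ ∃ A : RatFunc (AlgebraicClosure (ZMod p)),
      A ^ 2 = (X ^ (p - 1) - 1) * (X ^ 2 * (X ^ (p - 1) - 1) + 4) := by
  rintro ⟨A, hA⟩
  set K := AlgebraicClosure (ZMod p) with hK
  have hchar : CharP K p := by infer_instance
  have hmap : A ^ 2 = algebraMap (Polynomial K) (RatFunc K)
      ((Polynomial.X ^ (p - 1) - 1) *
        (Polynomial.X ^ 2 * (Polynomial.X ^ (p - 1) - 1) + 4)) := by
    rw [hA]
    simp [map_ofNat, RatFunc.algebraMap_X]
  set f : Polynomial K := Polynomial.X ^ (p - 1) - 1 with hf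
  set g : Polynomial K := Polynomial.X ^ 2 * f + 4 with hg
  -- A is integral over K[X], hence a polynomial
  have hint : IsIntegral (Polynomial K) A := by
    refine ⟨Polynomial.X ^ 2 - Polynomial.C (f * g),
      Polynomial.monic_X_pow_sub_C _ (by norm_num), ?_⟩
    simp only [Polynomial.eval₂_sub, Polynomial.eval₂_pow, Polynomial.eval₂_X,
      Polynomial.eval₂_C]
    rw [hmap, map_mul, sub_self]
  obtain ⟨q, hq⟩ := IsIntegrallyClosed.isIntegral_iff.mp hint
  have hinj := IsFractionRing.injective (Polynomial K) (RatFunc K)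
  have hq2 : q ^ 2 = f * g := by
    apply hinj
    rw [map_pow, hq, hmap]
  -- evaluate at 1
  have hf1 : f.eval 1 = 0 := by simp [hf]
  have hg1 : g.eval 1 = 4 := by simp [hg, hf1]
  have hq1 : q.eval 1 = 0 := by
    have : q.eval 1 ^ 2 = 0 := by
      rw [← Polynomial.eval_pow, hq2, Polynomial.eval_mul, hf1]
      ring
    exact pow_eq_zero_iff (by norm_num) |>.mp this
  obtain ⟨r, hr⟩ := (Polynomial.dvd_iff_isRoot.mpr hq1)
  have hfg : f * g = (Polynomial.X - Polynomial.C 1) ^ 2 * r ^ 2 := by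
    rw [← hq2, hr]; ring
  -- derivative at 1 of RHS is 0
  have hd0 : ((f * g).derivative).eval 1 = 0 := by
    rw [hfg]
    simp [Polynomial.derivative_mul, Polynomial.derivative_pow]
  -- derivative at 1 of LHS is -4
  have hfd1 : (f.derivative).eval 1 = ((p - 1 : ℕ) : K) := by
    simp [hf, Polynomial.derivative_sub, Polynomial.derivative_X_pow]
  have hp1 : ((p - 1 : ℕ) : K) = -1 := by
    have : ((p : ℕ) : K) = 0 := CharP.cast_eq_zero K p
    rw [Nat.cast_sub (Nat.one_le_of_lt hp), this, Nat.cast_one]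
    ring
  have hd1 : ((f * g).derivative).eval 1 = -4 := by
    rw [Polynomial.derivative_mul, Polynomial.eval_add, Polynomial.eval_mul,
      Polynomial.eval_mul, hf1, hg1, hfd1, hp1]
    ring
  rw [hd1] at hd0
  have h4 : ((4 : ℕ) : K) = 0 := by exact_mod_cast neg_eq_zero.mp hd0
  have hdvd : p ∣ 4 := (CharP.cast_eq_zero_iff K p 4).mp h4
  have hle := Nat.le_of_dvd (by norm_num) hdvd
  have hp4 : p = 4 := by omega
  exact absurd (hp4 ▸ (Fact.out : p.Prime)) (by norm_num)
end

section
/- Let p ≥ 3 be prime and b ∈ F_{p^2} with τ := Tr_{F_{p^2}/F_p}(b) satisfying τ^2 = 1. Then f_b(x) = x + (x^p - x + b)^{-1} is a permutation of F_{p^2}. -/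
theorem stmt9_aux (p : ℕ) [Fact p.Prime] (hp : 3 ≤ p)
    (F : Type) [Field F] [Fintype F] [Algebra (ZMod p) F]
    (hcard : Fintype.card F = p ^ 2)
    (b : F) (hb : (Algebra.trace (ZMod p) F b) ^ 2 = 1) :
    Function.Bijective (fun x : F => x + (x ^ p - x + b)⁻¹) := by
  classical
  have hp1 : 1 < p := by omega
  haveI : CharP F p := (Algebra.charP_iff (ZMod p) F p).mp (ZMod.charP p)
  have hrank : Module.finrank (ZMod p) F = 2 := by
    have h1 : Fintype.card F = p ^ Module.finrank (ZMod p) F := by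
      rw [Module.card_eq_pow_finrank (K := ZMod p) (V := F), ZMod.card]
    rw [hcard] at h1
    exact (Nat.pow_right_injective (by omega) h1.symm)
  -- Frobenius squared is the identity
  have hfrob : ∀ x : F, (x ^ p) ^ p = x := by
    intro x
    rw [← pow_mul, ← pow_two, ← hcard]
    exact FiniteField.pow_card x
  -- the Frobenius as an algebra equiv
  have hfrobbij : Function.Bijective (frobenius F p) :=
    Finite.injective_iff_bijective.mp (frobenius_inj F p)
  let φr : F ≃+* F := RingEquiv.ofBijective (frobenius F p) hfrobbij
  have hφr : ∀ x : F, φr x = x ^ p := fun x => rfl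
  let φ : F ≃ₐ[ZMod p] F := AlgEquiv.ofRingEquiv (f := φr) (fun c => by
    rw [hφr, ← map_pow, ZMod.pow_card])
  have hφ : ∀ x : F, φ x = x ^ p := fun x => rfl
  -- Frobenius is not the identity
  have hφne : φ ≠ 1 := by
    intro hid
    have hall : ∀ x : F, x ^ p = x := by
      intro x
      have := congrArg (fun e : F ≃ₐ[ZMod p] F => e x) hid
      simpa [hφ] using this
    have hne : (Polynomial.X ^ p - Polynomial.X : Polynomial F) ≠ 0 :=
      FiniteField.X_pow_card_sub_X_ne_zero F hp1
    have hsub : (Finset.univ : Finset F) ⊆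
        (Polynomial.X ^ p - Polynomial.X : Polynomial F).roots.toFinset := by
      intro x _
      rw [Multiset.mem_toFinset, Polynomial.mem_roots hne]
      simp [Polynomial.IsRoot, hall x]
    have h1 := Finset.card_le_card hsub
    have h2 := Multiset.toFinset_card_le
      (Polynomial.X ^ p - Polynomial.X : Polynomial F).roots
    have h3 := Polynomial.card_roots'
      (Polynomial.X ^ p - Polynomial.X : Polynomial F)
    rw [FiniteField.X_pow_card_sub_X_natDegree_eq F hp1] at h3
    rw [Finset.card_univ, hcard] at h1
    have : p ^ 2 ≤ p := le_trans h1 (le_trans h2 h3)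
    nlinarith
  -- the automorphism group is {1, φ}
  have hcardG : Fintype.card (F ≃ₐ[ZMod p] F) = 2 := by
    rw [← Nat.card_eq_fintype_card, IsGalois.card_aut_eq_finrank, hrank]
  have huniv : (Finset.univ : Finset (F ≃ₐ[ZMod p] F)) = {1, φ} := by
    symm
    apply Finset.eq_univ_of_card
    rw [Finset.card_pair (Ne.symm hφne), hcardG]
  -- the trace formula
  set τ : F := algebraMap (ZMod p) F (Algebra.trace (ZMod p) F b) with hτdef
  have hτ : τ = b + b ^ p := by
    rw [hτdef, trace_eq_sum_automorphisms, huniv,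
      Finset.sum_pair (Ne.symm hφne)]
    simp [hφ]
  have hτ2 : τ ^ 2 = 1 := by
    rw [hτdef, ← map_pow, hb, map_one]
  have hτp : τ ^ p = τ := by
    rw [hτdef, ← map_pow, ZMod.pow_card]
  -- basic facts about y = x^p - x + b
  have key : ∀ x : F, (x ^ p - x + b) ^ p = τ - (x ^ p - x + b) := by
    intro x
    rw [add_pow_char, sub_pow_char, hfrob x, hτ]
    ring
  have hyne : ∀ x : F, x ^ p - x + b ≠ 0 := by
    intro x h0
    have h1 := key x
    rw [h0, zero_pow (Nat.Prime.ne_zero (Fact.out)), sub_zero] at h1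
    rw [← h1] at hτ2
    simp at hτ2
  -- small characteristic facts
  have h2p : (2 : F) ^ p = 2 := by
    have : ((1 : F) + 1) ^ p = 1 ^ p + 1 ^ p := by rw [add_pow_char]
    simpa [one_add_one_eq_two] using this
  have h4p : (4 : F) ^ p = 4 := by
    rw [show (4 : F) = 2 * 2 by norm_num, mul_pow, h2p]
  have h2ne : (2 : F) ≠ 0 := by
    have : ((2 : ℕ) : F) ≠ 0 := by
      rw [Ne, CharP.cast_eq_zero_iff F p]
      intro hdvd
      have := Nat.le_of_dvd (by norm_num) hdvd
      omega
    simpa using this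
  have h4ne : (4 : F) ≠ 0 := by
    rw [show (4 : F) = 2 * 2 by norm_num]
    exact mul_ne_zero h2ne h2ne
  -- main argument: injectivity
  apply Finite.injective_iff_bijective.mp
  intro x1 x2 h
  simp only at h
  set y1 : F := x1 ^ p - x1 + b with hy1
  set y2 : F := x2 ^ p - x2 + b with hy2
  have k1 : y1 ^ p = τ - y1 := by rw [hy1]; exact key x1
  have k2 : y2 ^ p = τ - y2 := by rw [hy2]; exact key x2
  have n1 : y1 ≠ 0 := by rw [hy1]; exact hyne x1
  have n2 : y2 ≠ 0 := by rw [hy2]; exact hyne x2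
  -- from f x1 = f x2
  have h' : x1 - x2 = y2⁻¹ - y1⁻¹ := by
    linear_combination h
  have hd : (x1 - x2) * (y1 * y2) = y1 - y2 := by
    rw [h']
    field_simp
  have hup : (y1 - y2) ^ p = -(y1 - y2) := by
    rw [sub_pow_char, k1, k2]; ring
  have hdp : (x1 - x2) ^ p * (y1 * y2) ^ p = -(y1 - y2) := by
    rw [← mul_pow, hd, hup]
  have hE3 : y1 - y2 = (x1 - x2) ^ p - (x1 - x2) := by
    rw [sub_pow_char, hy1, hy2]; ring
  have hK : (y1 - y2) * ((y1 * y2) * (y1 * y2) ^ p + (y1 * y2) + (y1 * y2) ^ p)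
      = 0 := by
    linear_combination (y1 * y2) * (y1 * y2) ^ p * hE3 + (y1 * y2) * hdp
      - (y1 * y2) ^ p * hd
  by_cases hu : y1 - y2 = 0
  · -- y1 = y2 forces x1 = x2
    have h0 : (x1 - x2) * (y1 * y2) = 0 := by rw [hd, hu]
    rcases mul_eq_zero.mp h0 with h0 | h0
    · exact sub_eq_zero.mp h0
    · exact absurd h0 (mul_ne_zero n1 n2)
  · exfalso
    have hK' : (y1 * y2) * (y1 * y2) ^ p + (y1 * y2) + (y1 * y2) ^ p = 0 :=
      (mul_eq_zero.mp hK).resolve_left hu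
    have hsp : (y1 * y2) ^ p = y1 * y2 + 1 - τ * (y1 + y2) := by
      rw [mul_pow, k1, k2]
      linear_combination hτ2
    rw [hsp] at hK'
    -- the auxiliary element v
    have hwp : (y1 + y2) ^ p = 2 * τ - (y1 + y2) := by
      rw [add_pow_char, k1, k2]; ring
    have hv2 : (4 * (y1 * y2) + 4 - 2 * (τ * (y1 + y2))) ^ 2
        = (2 * (y1 - y2)) ^ 2 := by
      linear_combination 16 * hK' + 4 * (y1 + y2) ^ 2 * hτ2
    have hvp : (4 * (y1 * y2) + 4 - 2 * (τ * (y1 + y2))) ^ p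
        = 4 * (y1 * y2) + 4 - 2 * (τ * (y1 + y2)) := by
      rw [sub_pow_char, add_pow_char, mul_pow, hsp, mul_pow, mul_pow,
        h4p, h2p, hτp, hwp]
      linear_combination (-4 : F) * hτ2
    have hcase : ((4 * (y1 * y2) + 4 - 2 * (τ * (y1 + y2))) - 2 * (y1 - y2))
        * ((4 * (y1 * y2) + 4 - 2 * (τ * (y1 + y2))) + 2 * (y1 - y2)) = 0 := by
      linear_combination hv2
    have hodd : Odd p := (Fact.out : p.Prime).odd_of_ne_two (by omega)
    rcases mul_eq_zero.mp hcase with h0 | h0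
    · have hv : (4 * (y1 * y2) + 4 - 2 * (τ * (y1 + y2))) = 2 * (y1 - y2) :=
        sub_eq_zero.mp h0
      rw [hv, mul_pow, h2p, hup] at hvp
      have h4z : (4 : F) * (y1 - y2) = 0 := by linear_combination - hvp
      exact hu ((mul_eq_zero.mp h4z).resolve_left h4ne)
    · have hv : (4 * (y1 * y2) + 4 - 2 * (τ * (y1 + y2))) = -(2 * (y1 - y2)) := by
        linear_combination h0
      rw [hv, hodd.neg_pow, mul_pow, h2p, hup] at hvp
      have h4z : (4 : F) * (y1 - y2) = 0 := by linear_combination hvp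
      exact hu ((mul_eq_zero.mp h4z).resolve_left h4ne)

theorem stmt_9 (p : ℕ) [Fact p.Prime] (hp : 3 ≤ p)
    (b : GaloisField p 2)
    (hb : (Algebra.trace (ZMod p) (GaloisField p 2) b) ^ 2 = 1) :
    Function.Bijective (fun x : GaloisField p 2 => x + (x ^ p - x + b)⁻¹) := by
  haveI : Fintype (GaloisField p 2) := Fintype.ofFinite _
  have hcard : Fintype.card (GaloisField p 2) = p ^ 2 := by
    rw [Module.card_eq_pow_finrank (K := ZMod p), ZMod.card,
      GaloisField.finrank p (by norm_num)]
  exact stmt9_aux p hp (GaloisField p 2) hcard b hb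
end

section
/- Let p ≥ 3 be prime and b ∈ F_{p^2} with Tr_{F_{p^2}/F_p}(b) ≠ 0. Then f_b(x) = x + (x^p - x + b)^{-1} permutes F_{p^2} if and only if Tr_{F_{p^2}/F_p}(b) = 1 or Tr_{F_{p^2}/F_p}(b) = -1. -/
open Polynomial Finset

set_option linter.unusedSectionVars false
set_option maxHeartbeats 1000000

namespace Stmt10Aux

variable (p : ℕ) [Fact p.Prime] [Fintype (GaloisField p 2)] [DecidableEq (GaloisField p 2)]

local notation "K" => GaloisField p 2

lemma card_K : Fintype.card K = p ^ 2 := by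
  have := GaloisField.card p 2 (by norm_num)
  simpa [Nat.card_eq_fintype_card] using this

variable {p} in
lemma fr2 (x : K) : (x ^ p) ^ p = x := by
  calc (x ^ p) ^ p = x ^ p ^ 2 := by rw [← pow_mul, sq]
  _ = x := by rw [← card_K p, FiniteField.pow_card]

variable {p} in
lemma fr_add (x y : K) : (x + y) ^ p = x ^ p + y ^ p := map_add (frobenius K p) x y

variable {p} in
lemma fr_neg (x : K) : (-x) ^ p = -x ^ p := map_neg (frobenius K p) x

variable {p} in
lemma fr_sub (x y : K) : (x - y) ^ p = x ^ p - y ^ p := map_sub (frobenius K p) x y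

variable {p} in
lemma fr_nat (n : ℕ) : ((n : K)) ^ p = (n : K) := map_natCast (frobenius K p) n

variable {p} in
lemma fr_ofNat : ((8 : K)) ^ p = (8 : K) := by
  have := fr_nat (p := p) 8; simpa using this

/-- The trace-zero line as a finset. -/
noncomputable def S : Finset K :=
  @Finset.filter _ (fun u => u ^ p = -u) (Classical.decPred _) Finset.univ

variable {p} in
lemma mem_S {u : K} : u ∈ S p ↔ u ^ p = -u := by
  simp [S]

variable {p} in
lemma pp : p.Prime := Fact.out

variable {p} in
lemma ppos : 0 < p := pp.pos

variable {p} in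
lemma card_le_of_root (a : K) (T : Finset K) (hT : ∀ x ∈ T, x ^ p = a * x) : T.card ≤ p := by
  classical
  set Q : K[X] := X ^ p - C a * X with hQ
  have hQ0 : Q ≠ 0 := by
    intro h
    have h2 : Q.coeff p = 0 := by rw [h]; simp
    rw [hQ] at h2
    have hne : ¬ ((1:ℕ) = p) := fun h => pp.ne_one h.symm
    simp only [coeff_sub, coeff_X_pow, coeff_C_mul, coeff_X, if_pos rfl, if_neg hne] at h2
    simp at h2
  have hdeg : Q.natDegree ≤ p := by
    refine le_trans (natDegree_sub_le _ _) ?_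
    simp only [natDegree_X_pow, max_le_iff, le_refl, true_and]
    exact le_trans (natDegree_C_mul_le _ _) (by simp [ppos.le, pp.one_lt.le])
  have hsub : T ⊆ Q.roots.toFinset := by
    intro x hx
    rw [Multiset.mem_toFinset, mem_roots hQ0]
    simp only [hQ, IsRoot, eval_sub, eval_pow, eval_X, eval_mul, eval_C]
    rw [hT x hx]; ring
  calc T.card ≤ Q.roots.toFinset.card := card_le_card hsub
    _ ≤ Multiset.card Q.roots := Multiset.toFinset_card_le _
    _ ≤ Q.natDegree := card_roots' Q
    _ ≤ p := hdeg

variable {p} in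
lemma key_count : (S p).card = p ∧ ∀ u : K, u ^ p = -u → ∃ x : K, x ^ p - x = u := by
  classical
  set Φ : K → K := fun x => x ^ p - x with hΦ
  set I : Finset K := Finset.univ.image Φ with hI
  have hIS : I ⊆ S p := by
    intro v hv
    simp only [hI, mem_image, mem_univ, true_and] at hv
    obtain ⟨x, rfl⟩ := hv
    rw [mem_S, hΦ]
    simp only
    rw [fr_sub, fr2]; ring
  have hSle : (S p).card ≤ p := by
    apply card_le_of_root (-1 : K)
    intro x hx; rw [mem_S] at hx; rw [hx]; ring
  have hfib : ∀ v ∈ I, (Finset.univ.filter (fun x : K => Φ x = v)).card ≤ p := by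
    intro v hv
    simp only [hI, mem_image, mem_univ, true_and] at hv
    obtain ⟨x₀, hx₀⟩ := hv
    have h1 : (Finset.univ.filter (fun x : K => Φ x = v)).card
        ≤ (Finset.univ.filter (fun x : K => x ^ p = (1:K) * x)).card := by
      apply Finset.card_le_card_of_injOn (fun x => x - x₀)
      · intro x hx
        simp only [Finset.mem_coe, mem_filter, mem_univ, true_and] at hx ⊢
        rw [one_mul, fr_sub]
        have h2 : x ^ p - x = x₀ ^ p - x₀ := hx.trans hx₀.symm
        linear_combination h2
      · intro a _ b _ h
        simpa using sub_left_inj.mp h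
    refine le_trans h1 (card_le_of_root 1 _ ?_)
    intro x hx; exact (mem_filter.mp hx).2
  have hcard : p * p ≤ p * I.card := by
    have h3 := Finset.card_le_mul_card_image (Finset.univ : Finset K) p hfib
    rwa [card_univ, card_K, sq] at h3
  have hIcard : p ≤ I.card := Nat.le_of_mul_le_mul_left hcard ppos
  have hEq : I = S p := eq_of_subset_of_card_le hIS (le_trans hSle hIcard)
  have hScard : (S p).card = p := le_antisymm hSle (hEq ▸ hIcard)
  refine ⟨hScard, fun u hu => ?_⟩
  have : u ∈ I := hEq ▸ (mem_S.mpr hu)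
  simp only [hI, mem_image, mem_univ, true_and] at this
  obtain ⟨x, hx⟩ := this
  exact ⟨x, hx⟩


variable {p} in
lemma S_card : (S p).card = p := (key_count (p := p)).1

variable {p} in
lemma Q_degree : ((X:K[X]) ^ p + X).degree = (p : WithBot ℕ) := by
  have h1 : (X:K[X]).degree < ((X:K[X])^p).degree := by
    rw [degree_X, degree_X_pow]; exact_mod_cast pp.one_lt
  rw [degree_add_eq_left_of_degree_lt h1, degree_X_pow]

variable {p} in
lemma Q_monic : ((X:K[X]) ^ p + X).Monic := by
  refine (monic_X_pow p).add_of_left ?_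
  rw [degree_X, degree_X_pow]; exact_mod_cast pp.one_lt

variable {p} in
lemma Q_ne : ((X:K[X]) ^ p + X) ≠ 0 := Q_monic.ne_zero

variable {p} in
lemma Q_natDegree : ((X:K[X]) ^ p + X).natDegree = p :=
  natDegree_eq_of_degree_eq_some Q_degree

variable {p} in
lemma prod_S : ∏ u ∈ S p, (X - C u) = (X:K[X]) ^ p + X := by
  classical
  set P : K[X] := ∏ u ∈ S p, (X - C u) with hP
  have hmon : P.Monic := monic_prod_of_monic _ _ (fun u _ => monic_X_sub_C u)
  have hle : (S p).val ≤ ((X:K[X]) ^ p + X).roots := by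
    rw [Multiset.le_iff_count]
    intro a
    by_cases ha : a ∈ S p
    · rw [Multiset.count_eq_one_of_mem (S p).nodup (Finset.mem_val.mpr ha)]
      rw [count_roots]
      refine (rootMultiplicity_pos Q_ne).mpr ?_
      have := mem_S.mp ha
      simp [IsRoot, this]
    · rw [Multiset.count_eq_zero_of_notMem (by simpa [Finset.mem_val] using ha)]
      exact Nat.zero_le _
  have hdvd : P ∣ (X:K[X]) ^ p + X := by
    refine dvd_trans ?_ (prod_multiset_X_sub_C_dvd ((X:K[X]) ^ p + X))
    rw [hP, Finset.prod_eq_multiset_prod]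
    exact Multiset.prod_dvd_prod_of_le (Multiset.map_le_map hle)
  have hPdeg : P.natDegree = p := by
    rw [hP, natDegree_prod_of_monic _ _ (fun u _ => monic_X_sub_C u)]
    simp [natDegree_X_sub_C, S_card]
  obtain ⟨c, hc⟩ := hdvd
  have hc0 : c ≠ 0 := by rintro rfl; simp at hc; exact Q_ne hc
  have hcdeg : c.natDegree = 0 := by
    have h3 := Q_natDegree (p := p)
    rw [hc, natDegree_mul hmon.ne_zero hc0, hPdeg] at h3
    omega
  have hclead : c.coeff 0 = 1 := by
    have h1 : ((X:K[X]) ^ p + X).leadingCoeff = 1 := Q_monic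
    rw [hc, leadingCoeff_mul, hmon.leadingCoeff, one_mul, leadingCoeff, hcdeg] at h1
    exact h1
  have hc1 : c = 1 := by
    rw [eq_C_of_natDegree_le_zero (le_of_eq hcdeg), hclead, map_one]
  rw [hc, hc1, mul_one]

variable {p} in
lemma sum_prod_erase (c : K) : ∑ u ∈ S p, ∏ v ∈ (S p).erase u, (c - v) = 1 := by
  have hd : derivative (∏ u ∈ S p, ((X:K[X]) - C u)) = 1 := by
    rw [prod_S, derivative_add, derivative_X_pow, derivative_X, CharP.cast_eq_zero K p]
    simp
  have hd3 : derivative (∏ u ∈ S p, ((X:K[X]) - C u))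
      = ∑ u ∈ S p, ∏ v ∈ (S p).erase u, ((X:K[X]) - C v) := by
    rw [Finset.prod_eq_multiset_prod, derivative_prod, Finset.sum_eq_multiset_sum]
    apply congrArg Multiset.sum
    apply Multiset.map_congr rfl
    intro u _
    rw [derivative_sub, derivative_X, derivative_C, sub_zero, mul_one,
      Finset.prod_eq_multiset_prod, Finset.erase_val]
  have hd2 := hd3.symm.trans hd
  have := congrArg (eval c) hd2
  simpa [eval_finset_sum, eval_prod] using this

variable {p} in
lemma eval_prod_S (c : K) : ∏ u ∈ S p, (c - u) = c ^ p + c := by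
  have := congrArg (eval c) (prod_S (p := p))
  simpa [eval_prod] using this

variable {p} in
lemma factor_ne {c : K} (hc : c ^ p + c ≠ 0) : ∀ u ∈ S p, c - u ≠ 0 := by
  intro u hu h
  apply hc
  rw [← eval_prod_S (p := p) c]
  exact Finset.prod_eq_zero hu h

variable {p} in
lemma sum_inv {c : K} (hc : c ^ p + c ≠ 0) : ∑ u ∈ S p, (c - u)⁻¹ = (c ^ p + c)⁻¹ := by
  have h1 : ∀ u ∈ S p, (c - u)⁻¹ = (∏ v ∈ (S p).erase u, (c - v)) * (c ^ p + c)⁻¹ := by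
    intro u hu
    have hprod : (c - u) * ∏ v ∈ (S p).erase u, (c - v) = c ^ p + c := by
      rw [Finset.mul_prod_erase _ _ hu, eval_prod_S]
    have hA : (∏ v ∈ (S p).erase u, (c - v)) ≠ 0 :=
      prod_ne_zero_iff.mpr (fun v hv => factor_ne hc v (Finset.mem_of_mem_erase hv))
    rw [← hprod, mul_inv_rev, ← mul_assoc, mul_inv_cancel₀ hA, one_mul]
  rw [Finset.sum_congr rfl h1, ← Finset.sum_mul, sum_prod_erase, one_mul]

variable {p} in
lemma sum_inv_erase (h2 : (2:K) ≠ 0) {u : K} (hu : u ∈ S p) :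
    ∑ v ∈ (S p).erase u, (u - v)⁻¹ = 0 := by
  have hre : ∑ v ∈ (S p).erase u, (u - v)⁻¹ = ∑ w ∈ (S p).erase 0, w⁻¹ := by
    apply Finset.sum_nbij' (fun v => u - v) (fun w => u - w)
    · intro a ha
      obtain ⟨hne, haS⟩ := Finset.mem_erase.mp ha
      refine Finset.mem_erase.mpr ⟨sub_ne_zero.mpr (Ne.symm hne), ?_⟩
      rw [mem_S, fr_sub, mem_S.mp hu, mem_S.mp haS]; ring
    · intro a ha
      obtain ⟨hne, haS⟩ := Finset.mem_erase.mp ha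
      refine Finset.mem_erase.mpr ⟨?_, ?_⟩
      · intro h
        apply hne
        have : u - a - u = 0 := by rw [h]; ring
        simpa using (by linear_combination -this : a = (0:K))
      · rw [mem_S, fr_sub, mem_S.mp hu, mem_S.mp haS]; ring
    · intro a _; ring
    · intro a _; ring
    · intro a _; rfl
  rw [hre]
  apply Finset.sum_involution (fun w _ => -w)
  · intro a ha; rw [inv_neg]; ring
  · intro a ha hfa h
    obtain ⟨hne, -⟩ := Finset.mem_erase.mp ha
    apply hne
    have h2a : (2:K) * a = 0 := by rw [two_mul]; nth_rewrite 1 [← h]; ring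
    exact (mul_eq_zero.mp h2a).resolve_left h2
  · intro a _; ring
  · intro a ha
    obtain ⟨hne, haS⟩ := Finset.mem_erase.mp ha
    refine Finset.mem_erase.mpr ⟨neg_ne_zero.mpr hne, ?_⟩
    rw [mem_S, fr_neg, mem_S.mp haS]

variable {p} in
lemma sum_inv_sq (h2 : (2:K) ≠ 0) {c : K} (hc : c ^ p + c ≠ 0) :
    ∑ u ∈ S p, ((c - u)⁻¹) ^ 2 = ((c ^ p + c)⁻¹) ^ 2 := by
  have hcross : ∑ u ∈ S p, ∑ v ∈ (S p).erase u, (c - u)⁻¹ * (c - v)⁻¹ = 0 := by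
    have hpt : ∀ u ∈ S p, ∀ v ∈ (S p).erase u,
        (c - u)⁻¹ * (c - v)⁻¹ = (u - v)⁻¹ * (c - u)⁻¹ - (u - v)⁻¹ * (c - v)⁻¹ := by
      intro u hu v hv
      obtain ⟨hne, hvS⟩ := Finset.mem_erase.mp hv
      have h1 : c - u ≠ 0 := factor_ne hc u hu
      have h2' : c - v ≠ 0 := factor_ne hc v hvS
      have h3 : u - v ≠ 0 := sub_ne_zero.mpr (Ne.symm hne)
      field_simp
      ring
    rw [Finset.sum_congr rfl (fun u hu => Finset.sum_congr rfl (hpt u hu))]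
    have hsplit : ∀ u ∈ S p, ∑ v ∈ (S p).erase u,
        ((u - v)⁻¹ * (c - u)⁻¹ - (u - v)⁻¹ * (c - v)⁻¹)
        = (∑ v ∈ (S p).erase u, (u - v)⁻¹ * (c - u)⁻¹)
          - ∑ v ∈ (S p).erase u, (u - v)⁻¹ * (c - v)⁻¹ := fun u _ => Finset.sum_sub_distrib _ _
    rw [Finset.sum_congr rfl hsplit, Finset.sum_sub_distrib]
    have hfirst : ∑ u ∈ S p, ∑ v ∈ (S p).erase u, (u - v)⁻¹ * (c - u)⁻¹ = 0 := by
      refine Finset.sum_eq_zero (fun u hu => ?_)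
      rw [← Finset.sum_mul, sum_inv_erase h2 hu, zero_mul]
    have hsecond : ∑ u ∈ S p, ∑ v ∈ (S p).erase u, (u - v)⁻¹ * (c - v)⁻¹ = 0 := by
      rw [Finset.sum_comm' (s := S p) (t := fun u => (S p).erase u)
        (t' := S p) (s' := fun v => (S p).erase v) ?_]
      · refine Finset.sum_eq_zero (fun v hv => ?_)
        have hz : ∑ u ∈ (S p).erase v, (u - v)⁻¹ = 0 := by
          have hneg : ∀ u ∈ (S p).erase v, (u - v)⁻¹ = -(v - u)⁻¹ := by
            intro u _; rw [← inv_neg, neg_sub]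
          rw [Finset.sum_congr rfl hneg, Finset.sum_neg_distrib,
            sum_inv_erase h2 hv, neg_zero]
        rw [← Finset.sum_mul, hz, zero_mul]
      · intro x y
        constructor
        · rintro ⟨hx, hy⟩
          obtain ⟨hne, hyS⟩ := Finset.mem_erase.mp hy
          exact ⟨Finset.mem_erase.mpr ⟨fun h => hne h.symm, hx⟩, hyS⟩
        · rintro ⟨hx, hy⟩
          obtain ⟨hne, hxS⟩ := Finset.mem_erase.mp hx
          exact ⟨hxS, Finset.mem_erase.mpr ⟨fun h => hne h.symm, hy⟩⟩
    rw [hfirst, hsecond, sub_zero]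
  have hexp : (∑ u ∈ S p, (c - u)⁻¹) ^ 2
      = (∑ u ∈ S p, ((c - u)⁻¹) ^ 2)
        + ∑ u ∈ S p, ∑ v ∈ (S p).erase u, (c - u)⁻¹ * (c - v)⁻¹ := by
    rw [sq, Finset.sum_mul_sum, ← Finset.sum_add_distrib]
    refine Finset.sum_congr rfl (fun u hu => ?_)
    rw [← Finset.add_sum_erase (S p) (fun v => (c - u)⁻¹ * (c - v)⁻¹) hu, sq]
  rw [← sum_inv hc, hexp, hcross, add_zero]

variable {p} in
lemma exists_not_fixed : ∃ x : K, x ^ p ≠ x := by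
  by_contra h
  push_neg at h
  have hcard : Fintype.card K ≤ p :=
    card_le_of_root 1 Finset.univ (by intro x _; rw [one_mul]; exact h x)
  rw [card_K] at hcard
  have h1 := (pp (p := p)).one_lt
  nlinarith

noncomputable def frobA : K ≃ₐ[ZMod p] K :=
  { frobeniusEquiv K p with
    commutes' := fun r => by
      show (algebraMap (ZMod p) K r) ^ p = algebraMap (ZMod p) K r
      rw [← map_pow, ZMod.pow_card] }

variable {p} in
lemma frobA_apply (x : K) : frobA p x = x ^ p := rfl

variable {p} in
lemma trace_form (x : K) :
    algebraMap (ZMod p) K (Algebra.trace (ZMod p) K x) = x + x ^ p := by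
  classical
  rw [trace_eq_sum_automorphisms]
  have hcard2 : Fintype.card (K ≃ₐ[ZMod p] K) = 2 := by
    rw [← Nat.card_eq_fintype_card, IsGalois.card_aut_eq_finrank, GaloisField.finrank p (by norm_num)]
  obtain ⟨x₀, hx₀⟩ := exists_not_fixed (p := p)
  have hne : (1 : K ≃ₐ[ZMod p] K) ≠ frobA p := by
    intro h
    apply hx₀
    have := congrArg (fun σ : K ≃ₐ[ZMod p] K => σ x₀) h
    simpa [frobA_apply] using this.symm
  have huniv : (Finset.univ : Finset (K ≃ₐ[ZMod p] K)) = {1, frobA p} := by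
    symm
    apply Finset.eq_of_subset_of_card_le (Finset.subset_univ _)
    rw [Finset.card_univ, hcard2,
      Finset.card_insert_of_notMem (by simpa using hne), Finset.card_singleton]
  rw [show (∑ σ : K ≃ₐ[ZMod p] K, σ x) = ∑ σ ∈ (Finset.univ : Finset (K ≃ₐ[ZMod p] K)), σ x
    from rfl, huniv, Finset.sum_pair hne]
  simp [frobA_apply]

section Core
variable {p} {t b : GaloisField p 2}

lemma fr_num (n : ℕ) [n.AtLeastTwo] :
    (OfNat.ofNat n : K) ^ p = OfNat.ofNat n := by
  have := fr_nat (p := p) n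
  norm_num at this
  exact this

lemma y_frob (hbt : b + b ^ p = t) (x : K) :
    (x ^ p - x + b) ^ p = t - (x ^ p - x + b) := by
  rw [fr_add, fr_sub, fr2]
  linear_combination hbt

lemma y_ne (hbt : b + b ^ p = t) (ht0 : t ≠ 0) (x : K) : x ^ p - x + b ≠ 0 := by
  intro h
  apply ht0
  have h1 := y_frob hbt x
  rw [h, zero_pow (ppos (p := p)).ne'] at h1
  linear_combination -h1

lemma two_t_ne (h2 : (2:K) ≠ 0) (ht0 : t ≠ 0) : (2:K) * t ≠ 0 := mul_ne_zero h2 ht0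

lemma den_ne (htp : t ^ p = t) (ht0 : t ≠ 0) (h2 : (2:K) ≠ 0)
    {u : K} (hu : u ^ p = -u) : t ^ 2 - u ^ 2 ≠ 0 := by
  intro h
  have hsplit : (t - u) * (t + u) = 0 := by linear_combination h
  rcases mul_eq_zero.mp hsplit with h1 | h1
  · have hut : u = t := by linear_combination -h1
    rw [hut, htp] at hu
    have h2t : (2:K) * t = 0 := by linear_combination hu
    exact two_t_ne h2 ht0 h2t
  · have hut : u = -t := by linear_combination h1
    rw [hut, fr_neg, htp] at hu
    have h2t : (2:K) * t = 0 := by linear_combination -hu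
    exact two_t_ne h2 ht0 h2t

/-- The induced map on the trace-zero line. -/
noncomputable def gmap (t u : K) : K := u * (t ^ 2 + 8 - u ^ 2) * (t ^ 2 - u ^ 2)⁻¹

lemma gmap_frob (htp : t ^ p = t) {u : K} (hu : u ^ p = -u) :
    (gmap t u) ^ p = -(gmap t u) := by
  unfold gmap
  have h1 : (t ^ 2 + 8 - u ^ 2) ^ p = t ^ 2 + 8 - u ^ 2 := by
    rw [fr_sub, fr_add, ← pow_mul, mul_comm 2 p, pow_mul, ← pow_mul u, mul_comm 2 p,
      pow_mul u, htp, hu, fr_num]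
    ring
  have h2 : (t ^ 2 - u ^ 2) ^ p = t ^ 2 - u ^ 2 := by
    rw [fr_sub, ← pow_mul, mul_comm 2 p, pow_mul, ← pow_mul u, mul_comm 2 p,
      pow_mul u, htp, hu]
    ring
  rw [mul_pow, mul_pow, inv_pow, h1, h2, hu]
  ring

lemma conj_eq (hbt : b + b ^ p = t) (ht0 : t ≠ 0) (h2 : (2:K) ≠ 0) (x : K) :
    2 * ((x + (x ^ p - x + b)⁻¹) ^ p - (x + (x ^ p - x + b)⁻¹) + b) - t
      = gmap t (2 * (x ^ p - x + b) - t) := by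
  have hy := y_frob hbt x
  have hy0 := y_ne hbt ht0 x
  set y := x ^ p - x + b with hydef
  have hty : t - y ≠ 0 := by
    intro h
    apply hy0
    rw [h] at hy
    exact pow_eq_zero_iff (ppos (p := p)).ne' |>.mp hy
  have hstep : (x + y⁻¹) ^ p = x ^ p + (t - y)⁻¹ := by
    rw [fr_add, inv_pow, hy]
  rw [hstep]
  have hxp : x ^ p = y + x - b := by rw [hydef]; ring
  rw [hxp]
  unfold gmap
  have hden : t ^ 2 - (2 * y - t) ^ 2 ≠ 0 := by
    have h4 : t ^ 2 - (2 * y - t) ^ 2 = 4 * (y * (t - y)) := by ring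
    rw [h4]
    exact mul_ne_zero (by
      have : (4:K) = 2 * 2 := by norm_num
      rw [this]; exact mul_ne_zero h2 h2) (mul_ne_zero hy0 hty)
  field_simp
  ring

lemma delta_surj : ∀ u : K, u ^ p = -u → ∃ x : K, x ^ p - x = u :=
  (key_count (p := p)).2

lemma u_line (hbt : b + b ^ p = t) (htp : t ^ p = t) (x : K) :
    (2 * (x ^ p - x + b) - t) ^ p = -(2 * (x ^ p - x + b) - t) := by
  rw [fr_sub, mul_pow, fr_num, y_frob hbt, htp]
  ring

/-- If `gmap t` is injective on the line, then `f` is injective. -/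
lemma f_inj_of (hbt : b + b ^ p = t) (ht0 : t ≠ 0) (htp : t ^ p = t) (h2 : (2:K) ≠ 0)
    (hg : ∀ u w : K, u ^ p = -u → w ^ p = -w → gmap t u = gmap t w → u = w) :
    Function.Injective (fun x : K => x + (x ^ p - x + b)⁻¹) := by
  intro x₁ x₂ hf
  simp only at hf
  have hc1 := conj_eq hbt ht0 h2 x₁
  have hc2 := conj_eq hbt ht0 h2 x₂
  rw [hf] at hc1
  have hgu : gmap t (2 * (x₁ ^ p - x₁ + b) - t) = gmap t (2 * (x₂ ^ p - x₂ + b) - t) := by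
    rw [← hc1, ← hc2]
  have huw := hg _ _ (u_line hbt htp x₁) (u_line hbt htp x₂) hgu
  have hy12 : x₁ ^ p - x₁ + b = x₂ ^ p - x₂ + b := by
    have h2' : (2:K) * (x₁ ^ p - x₁ + b) = 2 * (x₂ ^ p - x₂ + b) := by linear_combination huw
    exact mul_left_cancel₀ h2 h2'
  rw [hy12] at hf
  exact add_right_cancel hf

/-- If `f` is injective then `gmap t` is injective on the line. -/
lemma g_inj_of (hbt : b + b ^ p = t) (ht0 : t ≠ 0) (htp : t ^ p = t) (h2 : (2:K) ≠ 0)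
    (hf : Function.Injective (fun x : K => x + (x ^ p - x + b)⁻¹)) :
    ∀ u w : K, u ^ p = -u → w ^ p = -w → gmap t u = gmap t w → u = w := by
  intro u w hu hw hguw
  have hyl : ∀ v : K, v ^ p = -v → ((t + v) / 2 - b) ^ p = -((t + v) / 2 - b) := by
    intro v hv
    rw [fr_sub, div_pow, fr_add, fr_num, htp, hv]
    have hbp : b ^ p = t - b := by linear_combination hbt
    rw [hbp]
    field_simp
    ring
  obtain ⟨x₁, hx₁⟩ := delta_surj _ (hyl u hu)
  obtain ⟨x₂, hx₂⟩ := delta_surj _ (hyl w hw)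
  have hx₁y : x₁ ^ p - x₁ + b = (t + u) / 2 := by linear_combination hx₁
  have hx₂y : x₂ ^ p - x₂ + b = (t + w) / 2 := by linear_combination hx₂
  have hu1 : 2 * (x₁ ^ p - x₁ + b) - t = u := by
    rw [hx₁y]; field_simp; ring
  have hu2 : 2 * (x₂ ^ p - x₂ + b) - t = w := by
    rw [hx₂y]; field_simp; ring
  have hc1 := conj_eq hbt ht0 h2 x₁
  have hc2 := conj_eq hbt ht0 h2 x₂
  rw [hu1] at hc1
  rw [hu2] at hc2
  set F₁ := x₁ + (x₁ ^ p - x₁ + b)⁻¹ with hF₁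
  set F₂ := x₂ + (x₂ ^ p - x₂ + b)⁻¹ with hF₂
  have hz : F₁ ^ p - F₁ + b = F₂ ^ p - F₂ + b := by
    have hzz : 2 * (F₁ ^ p - F₁ + b) - t = 2 * (F₂ ^ p - F₂ + b) - t := by
      rw [hc1, hc2, hguw]
    exact mul_left_cancel₀ h2 (by linear_combination hzz)
  set c := F₁ - F₂ with hc
  have hcp : c ^ p = c := by
    rw [hc, fr_sub]
    linear_combination hz
  have hy2' : (x₂ + c) ^ p - (x₂ + c) + b = x₂ ^ p - x₂ + b := by
    rw [fr_add, hcp]; ring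
  have hf2' : (x₂ + c) + ((x₂ + c) ^ p - (x₂ + c) + b)⁻¹ = F₁ := by
    rw [hy2', hc, hF₁, hF₂]; ring
  have hxx : x₂ + c = x₁ := by
    apply hf
    simp only
    rw [hf2']
  have hyy : x₂ ^ p - x₂ + b = x₁ ^ p - x₁ + b := by
    rw [← hy2', hxx]
  rw [hx₁y, hx₂y] at hyy
  field_simp at hyy
  exact (add_left_cancel hyy).symm

/-- When t² = 1, `gmap t` is injective on the line. -/
lemma g_inj_t1 (htp : t ^ p = t) (ht0 : t ≠ 0) (h2 : (2:K) ≠ 0) (ht1 : t ^ 2 = 1) :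
    ∀ u w : K, u ^ p = -u → w ^ p = -w → gmap t u = gmap t w → u = w := by
  intro u w hu hw hg
  have hdu := den_ne htp ht0 h2 hu
  have hdw := den_ne htp ht0 h2 hw
  have hpoly : u * (t ^ 2 + 8 - u ^ 2) * (t ^ 2 - w ^ 2)
      = w * (t ^ 2 + 8 - w ^ 2) * (t ^ 2 - u ^ 2) := by
    unfold gmap at hg
    field_simp at hg
    linear_combination hg
  rw [ht1] at hpoly
  have hfac : (u - w) * (u ^ 2 * w ^ 2 + 8 * (u * w) + 9 - u ^ 2 - w ^ 2) = 0 := by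
    linear_combination hpoly
  rcases mul_eq_zero.mp hfac with h | h
  · linear_combination h
  · have hsplit : ((u - w) - (u * w + 3)) * ((u - w) + (u * w + 3)) = 0 := by
      linear_combination -h
    have hcfr : (u - w) ^ p = -(u - w) := by rw [fr_sub, hu, hw]; ring
    have hefr : (u * w + 3) ^ p = u * w + 3 := by
      rw [fr_add, mul_pow, hu, hw, fr_num]; ring
    have key : ∀ s : K, s = 1 ∨ s = -1 → u - w = s * (u * w + 3) → u = w := by
      intro s hs heq
      have hfr2 : -(u - w) = u - w := by
        rw [← hcfr, heq, mul_pow]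
        have hsp : s ^ p = s := by
          rcases hs with rfl | rfl
          · exact one_pow p
          · rw [fr_neg, one_pow]
        rw [hsp, hefr, ← heq]
      have h2w : (2:K) * (u - w) = 0 := by linear_combination -hfr2
      have := (mul_eq_zero.mp h2w).resolve_left h2
      linear_combination this
    rcases mul_eq_zero.mp hsplit with h1 | h1
    · exact key 1 (Or.inl rfl) (by linear_combination h1)
    · exact key (-1) (Or.inr rfl) (by linear_combination h1)

lemma t_sq (htp : t ^ p = t) (ht0 : t ≠ 0) (h2 : (2:K) ≠ 0) (h8 : (8:K) ≠ 0)
    (hg : ∀ u w : K, u ^ p = -u → w ^ p = -w → gmap t u = gmap t w → u = w) :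
    t ^ 2 = 1 := by
  have h2t : t ^ p + t ≠ 0 := by
    rw [htp]; intro h; exact two_t_ne h2 ht0 (by linear_combination h)
  have h2t' : (-t) ^ p + (-t) ≠ 0 := by
    rw [fr_neg, htp]; intro h; exact two_t_ne h2 ht0 (by linear_combination -h)
  have hmaps : ∀ u ∈ S p, gmap t u ∈ S p :=
    fun u hu => mem_S.mpr (gmap_frob htp (mem_S.mp hu))
  have hinj : Set.InjOn (gmap t) (S p) :=
    fun u hu w hw h => hg u w (mem_S.mp (by simpa using hu)) (mem_S.mp (by simpa using hw)) h
  have himg : (S p).image (gmap t) = S p := by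
    apply Finset.eq_of_subset_of_card_le
    · intro v hv
      obtain ⟨u, hu, rfl⟩ := Finset.mem_image.mp hv
      exact hmaps u hu
    · rw [Finset.card_image_of_injOn hinj]
  have hsum : ∑ u ∈ S p, (gmap t u) ^ 2 = ∑ u ∈ S p, u ^ 2 := by
    conv_rhs => rw [← himg]
    rw [Finset.sum_image (fun u hu w hw h => hinj hu hw h)]
  have hpt : ∀ u ∈ S p, (gmap t u) ^ 2 - u ^ 2
      = -16 + (8 * t - 16 * t⁻¹) * ((t - u)⁻¹ + (t + u)⁻¹)
        + 16 * (((t - u)⁻¹) ^ 2 + ((t + u)⁻¹) ^ 2) := by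
    intro u hu
    have hu' := mem_S.mp hu
    have hden := den_ne htp ht0 h2 hu'
    have htu : t - u ≠ 0 := fun h => hden (by linear_combination (t + u) * h)
    have htu' : t + u ≠ 0 := fun h => hden (by linear_combination (t - u) * h)
    unfold gmap
    field_simp
    ring
  have hS1 : ∑ u ∈ S p, (t - u)⁻¹ = (2 * t)⁻¹ := by
    rw [sum_inv h2t]
    congr 1; rw [htp]; ring
  have hS2 : ∑ u ∈ S p, (t + u)⁻¹ = (2 * t)⁻¹ := by
    have h := sum_inv h2t'
    have hrw : ∀ u ∈ S p, (-t - u)⁻¹ = -(t + u)⁻¹ := by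
      intro u _
      rw [show (-t - u : K) = -(t + u) by ring, inv_neg]
    rw [Finset.sum_congr rfl hrw, Finset.sum_neg_distrib] at h
    have h3 : ∑ u ∈ S p, (t + u)⁻¹ = -((-t) ^ p + -t)⁻¹ := by linear_combination -h
    rw [h3, fr_neg, htp, show (-t + -t : K) = -(2 * t) by ring, inv_neg, neg_neg]
  have hS3 : ∑ u ∈ S p, ((t - u)⁻¹) ^ 2 = ((2 * t)⁻¹) ^ 2 := by
    rw [sum_inv_sq h2 h2t]
    congr 2; rw [htp]; ring
  have hS4 : ∑ u ∈ S p, ((t + u)⁻¹) ^ 2 = ((2 * t)⁻¹) ^ 2 := by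
    have h := sum_inv_sq h2 h2t'
    have hrw : ∀ u ∈ S p, ((-t - u)⁻¹) ^ 2 = ((t + u)⁻¹) ^ 2 := by
      intro u _
      rw [show (-t - u : K) = -(t + u) by ring, inv_neg]; ring
    rw [Finset.sum_congr rfl hrw] at h
    rw [h, fr_neg, htp, show (-t + -t : K) = -(2 * t) by ring, inv_neg]; ring
  have hcardK : (((S p).card : ℕ) : K) = 0 := by
    rw [S_card]; exact CharP.cast_eq_zero K p
  have htot : ∑ u ∈ S p, ((gmap t u) ^ 2 - u ^ 2) = 8 - 8 * (t ^ 2)⁻¹ := by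
    rw [Finset.sum_congr rfl hpt, Finset.sum_add_distrib, Finset.sum_add_distrib,
      Finset.sum_const, ← Finset.mul_sum, ← Finset.mul_sum,
      Finset.sum_add_distrib, hS1, hS2, Finset.sum_add_distrib, hS3, hS4,
      nsmul_eq_mul, hcardK, zero_mul]
    have ht2 : t ^ 2 ≠ 0 := pow_ne_zero _ ht0
    field_simp
    ring
  have hzero : ∑ u ∈ S p, ((gmap t u) ^ 2 - u ^ 2) = 0 := by
    rw [Finset.sum_sub_distrib, hsum, sub_self]
  rw [hzero] at htot
  have ht2 : t ^ 2 ≠ 0 := pow_ne_zero _ ht0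
  field_simp at htot
  have h88 : (8:K) * t ^ 2 = 8 * 1 := by linear_combination -htot
  exact mul_left_cancel₀ h8 h88

end Core
end Stmt10Aux

theorem stmt_10 (p : ℕ) [Fact p.Prime] (hp : 3 ≤ p)
    (b : GaloisField p 2)
    (hb : Algebra.trace (ZMod p) (GaloisField p 2) b ≠ 0) :
    Function.Bijective (fun x : GaloisField p 2 => x + (x ^ p - x + b)⁻¹) ↔
      Algebra.trace (ZMod p) (GaloisField p 2) b = 1 ∨
      Algebra.trace (ZMod p) (GaloisField p 2) b = -1 := by
  classical
  letI : Fintype (GaloisField p 2) := Fintype.ofFinite _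
  set τ := Algebra.trace (ZMod p) (GaloisField p 2) b with hτ
  set t : GaloisField p 2 := algebraMap (ZMod p) (GaloisField p 2) τ with ht
  have hbt : b + b ^ p = t := (Stmt10Aux.trace_form b).symm
  have htp : t ^ p = t := by rw [ht, ← map_pow, ZMod.pow_card]
  have haminj : Function.Injective (algebraMap (ZMod p) (GaloisField p 2)) :=
    (algebraMap (ZMod p) (GaloisField p 2)).injective
  have ht0 : t ≠ 0 := by
    rw [ht]
    intro h
    exact hb (haminj (by simpa using h))
  have h2 : (2 : GaloisField p 2) ≠ 0 := by
    rw [show (2 : GaloisField p 2) = ((2:ℕ) : GaloisField p 2) by norm_num, Ne,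
      CharP.cast_eq_zero_iff (GaloisField p 2) p]
    intro hdvd
    have := Nat.le_of_dvd (by norm_num) hdvd
    omega
  have h8 : (8 : GaloisField p 2) ≠ 0 := by
    rw [show (8 : GaloisField p 2) = ((8:ℕ) : GaloisField p 2) by norm_num, Ne,
      CharP.cast_eq_zero_iff (GaloisField p 2) p]
    intro hdvd
    have h23 : (8:ℕ) = 2 ^ 3 := by norm_num
    rw [h23] at hdvd
    have := (Fact.out : p.Prime).dvd_of_dvd_pow hdvd
    have := Nat.le_of_dvd (by norm_num) this
    omega
  constructor
  · intro hbij
    have hg := Stmt10Aux.g_inj_of hbt ht0 htp h2 hbij.injective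
    have ht1 := Stmt10Aux.t_sq htp ht0 h2 h8 hg
    have hτ2 : τ ^ 2 = 1 := by
      apply haminj
      rw [map_pow, map_one]
      exact ht1
    have hfac : (τ - 1) * (τ + 1) = 0 := by linear_combination hτ2
    rcases mul_eq_zero.mp hfac with h | h
    · left; linear_combination h
    · right; linear_combination h
  · intro hτ1
    have ht1 : t ^ 2 = 1 := by
      rw [ht]
      rcases hτ1 with h | h
      · rw [h]; simp
      · rw [h]; simp
    have hg := Stmt10Aux.g_inj_t1 htp ht0 h2 ht1
    have hfinj := Stmt10Aux.f_inj_of hbt ht0 htp h2 hg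
    exact Finite.injective_iff_bijective.mp hfinj
end

section
/- Let p ≥ 3 be prime and y ∈ F_{p^2} with y ≠ 0. If y^2 + y^{2p} - y^{1+p} - y^{2+p} + y^{1+2p} = 0, then y ∈ F_p, and consequently y^2 = 0, a contradiction; hence no nonzero y ∈ F_{p^2} satisfies this equation. -/
theorem stmt_11 (p : ℕ) [Fact p.Prime] (hp : 3 ≤ p) :
    ¬ ∃ y : GaloisField p 2, y ≠ 0 ∧
      y ^ 2 + y ^ (2 * p) - y ^ (1 + p) - y ^ (2 + p) + y ^ (1 + 2 * p) = 0 := by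
  rintro ⟨y, hy, h⟩
  set b := y ^ p with hbdef
  haveI : Fintype (GaloisField p 2) := Fintype.ofFinite _
  have hb : b ^ p = y := by
    rw [hbdef, ← pow_mul, ← pow_two]
    have hcard : Fintype.card (GaloisField p 2) = p ^ 2 := by rw [← Nat.card_eq_fintype_card]; exact GaloisField.card p 2 two_ne_zero
    rw [← hcard]
    exact FiniteField.pow_card y
  have h1 : y ^ 2 + b ^ 2 - y * b - y ^ 2 * b + y * b ^ 2 = 0 := by
    rw [hbdef, ← h]; ring
  have h2 : b ^ 2 + y ^ 2 - b * y - b ^ 2 * y + b * y ^ 2 = 0 := by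
    have h0 := congrArg (frobenius (GaloisField p 2) p) h1
    simp only [map_add, map_sub, map_mul, map_pow, map_zero, frobenius_def, hb] at h0
    linear_combination h0
  have key : 2 * (y * b) * (b - y) = 0 := by linear_combination h1 - h2
  have h2ne : (2 : GaloisField p 2) ≠ 0 := by
    have : ((2 : ℕ) : GaloisField p 2) ≠ 0 := by
      rw [Ne, CharP.cast_eq_zero_iff (GaloisField p 2) p 2]
      intro hdvd
      have := Nat.le_of_dvd (by norm_num) hdvd
      omega
    simpa using this
  have hbne : b ≠ 0 := pow_ne_zero _ hy
  have hby : b = y := by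
    have hne : 2 * (y * b) ≠ 0 := mul_ne_zero h2ne (mul_ne_zero hy hbne)
    have := (mul_eq_zero.mp key).resolve_left hne
    exact sub_eq_zero.mp this
  rw [hby] at h1
  have hsq : y ^ 2 = 0 := by linear_combination h1
  exact hy (pow_eq_zero_iff two_ne_zero |>.mp hsq)
end

section
/- Let p ≥ 5 be prime and τ ∈ F_p with τ ≠ 0 and τ^2 ≠ 1, and set t = τ^2. The polynomial G(X,Y) = X^4 + Y^4 - 2tX^3Y + (-2 + 4t + t^2)X^2Y^2 - tX^4Y^2 - 2tXY^3 + 2tX^3Y^3 - tX^2Y^4 is irreducible over the algebraic closure of F_p. -/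
section SqContra

open Polynomial

variable {K : Type*} [Field K]

lemma sq_contra (t : K) (h2 : (2 : K) ≠ 0) (ht0 : t ≠ 0) (ht1 : t ≠ 1) (c : Polynomial K) :
    c ^ 2 ≠ X ^ 4 - C (2 * t) * X ^ 3 + C (t ^ 2 + 4 * t - 2) * X ^ 2 - C (2 * t) * X + 1 := by
  intro h
  set A1 : Polynomial K := X ^ 4 - C (2 * t) * X ^ 3 + C (t ^ 2 + 4 * t - 2) * X ^ 2
    - C (2 * t) * X + 1 with hA1
  have coeffA : ∀ k, A1.coeff k = (X ^ 4 : Polynomial K).coeff k - (2*t) * (X^3 : Polynomial K).coeff k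
      + (t^2+4*t-2) * (X^2 : Polynomial K).coeff k - (2*t) * (X : Polynomial K).coeff k
      + (1 : Polynomial K).coeff k := by
    intro k
    rw [hA1]
    simp only [coeff_add, coeff_sub, coeff_C_mul]
  have hc4 : A1.coeff 4 = 1 := by
    rw [coeffA]
    norm_num [coeff_X_pow, coeff_one, coeff_X]
  have hdegle : A1.natDegree ≤ 4 := by
    rw [hA1]
    compute_degree
  have hdeg : A1.natDegree = 4 := by
    refine le_antisymm hdegle (le_natDegree_of_ne_zero ?_)
    rw [hc4]; exact one_ne_zero
  have hc0 : c ≠ 0 := by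
    rintro rfl
    rw [show ((0:Polynomial K)^2) = 0 by ring] at h
    rw [← h] at hc4
    simp at hc4
  have hcdeg : c.natDegree = 2 := by
    have := congrArg Polynomial.natDegree h
    rw [Polynomial.natDegree_pow, hdeg] at this
    omega
  set α := c.coeff 2
  set β := c.coeff 1
  set γ := c.coeff 0
  have hc3 : c.coeff 3 = 0 := coeff_eq_zero_of_natDegree_lt (by omega)
  have hcc4 : c.coeff 4 = 0 := coeff_eq_zero_of_natDegree_lt (by omega)
  have coeff_sq : ∀ k : ℕ, (c ^ 2).coeff k = ∑ i ∈ Finset.range (k + 1),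
      c.coeff i * c.coeff (k - i) := by
    intro k
    rw [sq, Polynomial.coeff_mul, Finset.Nat.sum_antidiagonal_eq_sum_range_succ_mk]
  have e4 : α * α = 1 := by
    have := congrArg (fun q => Polynomial.coeff q 4) h
    simp only [coeff_sq] at this
    rw [Finset.sum_range_succ, Finset.sum_range_succ, Finset.sum_range_succ,
      Finset.sum_range_succ, Finset.sum_range_succ, Finset.sum_range_zero] at this
    simp only [hc3, hcc4, hc4] at this
    simpa using this
  have e3 : 2 * (α * β) = -(2 * t) := by
    have := congrArg (fun q => Polynomial.coeff q 3) h
    simp only [coeff_sq] at this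
    rw [Finset.sum_range_succ, Finset.sum_range_succ, Finset.sum_range_succ,
      Finset.sum_range_succ, Finset.sum_range_zero] at this
    have hA3 : A1.coeff 3 = -(2*t) := by rw [coeffA]; norm_num [coeff_X_pow, coeff_one, coeff_X]
    rw [hA3] at this
    simp only [hc3] at this
    linear_combination this
  have e2 : β * β + 2 * (α * γ) = t ^ 2 + 4 * t - 2 := by
    have := congrArg (fun q => Polynomial.coeff q 2) h
    simp only [coeff_sq] at this
    rw [Finset.sum_range_succ, Finset.sum_range_succ, Finset.sum_range_succ,
      Finset.sum_range_zero] at this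
    have hA2 : A1.coeff 2 = t ^ 2 + 4 * t - 2 := by rw [coeffA]; norm_num [coeff_X_pow, coeff_one, coeff_X]
    rw [hA2] at this
    linear_combination this
  have e1 : 2 * (β * γ) = -(2 * t) := by
    have := congrArg (fun q => Polynomial.coeff q 1) h
    simp only [coeff_sq] at this
    rw [Finset.sum_range_succ, Finset.sum_range_succ, Finset.sum_range_zero] at this
    have hA1' : A1.coeff 1 = -(2*t) := by rw [coeffA]; norm_num [coeff_X_pow, coeff_one, coeff_X]
    rw [hA1'] at this
    linear_combination this
  have e0 : γ * γ = 1 := by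
    have := congrArg (fun q => Polynomial.coeff q 0) h
    simp only [coeff_sq] at this
    rw [Finset.sum_range_succ, Finset.sum_range_zero] at this
    have hA0 : A1.coeff 0 = 1 := by rw [coeffA]; norm_num [coeff_X_pow, coeff_one, coeff_X]
    rw [hA0] at this
    linear_combination this
  -- now the algebra
  have hαβ : α * β = -t := by
    have := mul_left_cancel₀ h2 (by linear_combination e3 : 2 * (α * β) = 2 * (-t))
    exact this
  have hβγ : β * γ = -t := by
    exact mul_left_cancel₀ h2 (by linear_combination e1 : 2 * (β * γ) = 2 * (-t))
  have hβ0 : β ≠ 0 := by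
    intro hb
    rw [hb] at hαβ
    simp at hαβ
    exact ht0 hαβ
  have hαγ : α = γ := by
    have : β * α = β * γ := by linear_combination hαβ - hβγ
    exact mul_left_cancel₀ hβ0 this
  -- β² = t², αγ = α² = 1
  have hβsq : β * β = t * t := by
    have h1 : (α * β) * (α * β) = t * t := by rw [hαβ]; ring
    calc β * β = (α * α) * (β * β) := by rw [e4]; ring
    _ = t * t := by linear_combination h1
  have : t * t + 2 = t ^ 2 + 4 * t - 2 := by
    rw [← hβsq, ← e2, hαγ, e0]
    ring
  have h4t : 4 * t = 4 := by linear_combination -this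
  have h40 : (4 : K) ≠ 0 := by
    intro h40
    have h22 : (2 : K) * 2 = 0 := by linear_combination h40
    rcases mul_eq_zero.mp h22 with h' | h' <;> exact h2 h'
  exact ht1 (mul_left_cancel₀ h40 (by linear_combination h4t))
end SqContra


open MvPolynomial Finset

variable {σ R : Type*}

lemma aux_degree_add (u v : σ →₀ ℕ) : (u + v).degree = u.degree + v.degree := by
  simp [Finsupp.degree_eq_weight_one, map_add]

lemma hc_mul [CommSemiring R] (f g : MvPolynomial σ R) (k : ℕ) :
    homogeneousComponent k (f * g) =
      ∑ ij ∈ Finset.HasAntidiagonal.antidiagonal k,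
        homogeneousComponent ij.1 f * homogeneousComponent ij.2 g := by
  classical
  have inner : ∀ x y : σ →₀ ℕ,
      (∑ ij ∈ Finset.HasAntidiagonal.antidiagonal k,
        (if x.degree = ij.1 then coeff x f else 0) * (if y.degree = ij.2 then coeff y g else 0))
      = if x.degree + y.degree = k then coeff x f * coeff y g else 0 := by
    intro x y
    split_ifs with h
    · rw [Finset.sum_eq_single_of_mem (x.degree, y.degree)]
      · simp
      · simpa using h
      · rintro ⟨i, j⟩ hij hne
        rw [Finset.HasAntidiagonal.mem_antidiagonal] at hij
        by_cases hx : x.degree = i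
        · have : y.degree ≠ j := fun hy => hne (by simp [← hx, ← hy])
          simp [this]
        · simp [hx]
    · apply Finset.sum_eq_zero
      rintro ⟨i, j⟩ hij
      rw [Finset.HasAntidiagonal.mem_antidiagonal] at hij
      by_cases hx : x.degree = i
      · have : y.degree ≠ j := fun hy => h (by rw [hx, hy, hij])
        simp [this]
      · simp [hx]
  ext d
  rw [coeff_homogeneousComponent, MvPolynomial.coeff_sum]
  have rhs1 : ∀ ij ∈ Finset.HasAntidiagonal.antidiagonal k,
      coeff d (homogeneousComponent ij.1 f * homogeneousComponent ij.2 g)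
      = ∑ uv ∈ Finset.HasAntidiagonal.antidiagonal d,
          (if uv.1.degree = ij.1 then coeff uv.1 f else 0) *
            (if uv.2.degree = ij.2 then coeff uv.2 g else 0) := by
    rintro ⟨i, j⟩ _
    rw [MvPolynomial.coeff_mul]
    exact Finset.sum_congr rfl fun uv _ => by
      rw [coeff_homogeneousComponent, coeff_homogeneousComponent]
  rw [Finset.sum_congr rfl rhs1, Finset.sum_comm]
  have : ∀ uv ∈ Finset.HasAntidiagonal.antidiagonal d,
      (∑ ij ∈ Finset.HasAntidiagonal.antidiagonal k,
        (if uv.1.degree = ij.1 then coeff uv.1 f else 0) *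
          (if uv.2.degree = ij.2 then coeff uv.2 g else 0))
      = if d.degree = k then coeff uv.1 f * coeff uv.2 g else 0 := by
    rintro ⟨u, v⟩ huv
    rw [Finset.HasAntidiagonal.mem_antidiagonal] at huv
    rw [inner u v, ← huv, aux_degree_add]
  rw [Finset.sum_congr rfl this]
  split_ifs with hd
  · rw [MvPolynomial.coeff_mul]
  · simp

lemma hc_top_ne_zero [CommSemiring R] {f : MvPolynomial σ R} (hf : f ≠ 0) :
    homogeneousComponent f.totalDegree f ≠ 0 := by
  obtain ⟨d, hd, hdeg⟩ := Finset.exists_mem_eq_sup f.support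
    (support_nonempty.mpr hf) (fun s => s.sum fun _ e => e)
  intro h
  have hcoeff : coeff d (homogeneousComponent f.totalDegree f) = coeff d f := by
    rw [coeff_homogeneousComponent, if_pos]
    show d.degree = f.totalDegree
    rw [MvPolynomial.totalDegree, hdeg]
    rfl
  rw [h] at hcoeff
  exact (MvPolynomial.mem_support_iff.mp hd) hcoeff.symm

lemma hc_mul_top [CommSemiring R] (f g : MvPolynomial σ R) {i j : ℕ}
    (hf : ∀ a, i < a → homogeneousComponent a f = 0)
    (hg : ∀ b, j < b → homogeneousComponent b g = 0) :
    homogeneousComponent (i + j) (f * g) =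
      homogeneousComponent i f * homogeneousComponent j g := by
  rw [hc_mul]
  apply Finset.sum_eq_single_of_mem (i, j) (by simp)
  rintro ⟨a, b⟩ hab hne
  rw [Finset.HasAntidiagonal.mem_antidiagonal] at hab
  rcases lt_or_ge i a with h | h
  · rw [hf a h, zero_mul]
  · have : j < b := by
      rcases lt_or_eq_of_le h with h' | h'
      · omega
      · exact absurd (by simp [h']; omega : (a, b) = (i, j)) hne
    rw [hg b this, mul_zero]

lemma hc_mul_bot [CommSemiring R] (f g : MvPolynomial σ R) {i j : ℕ}
    (hf : ∀ a, a < i → homogeneousComponent a f = 0)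
    (hg : ∀ b, b < j → homogeneousComponent b g = 0) :
    homogeneousComponent (i + j) (f * g) =
      homogeneousComponent i f * homogeneousComponent j g := by
  rw [hc_mul]
  apply Finset.sum_eq_single_of_mem (i, j) (by simp)
  rintro ⟨a, b⟩ hab hne
  rw [Finset.HasAntidiagonal.mem_antidiagonal] at hab
  rcases lt_or_ge a i with h | h
  · rw [hf a h, zero_mul]
  · have : b < j := by
      rcases lt_or_eq_of_le h with h' | h'
      · omega
      · exact absurd (by simp [← h']; omega : (a, b) = (i, j)) hne
    rw [hg b this, mul_zero]

lemma hc_mul_exists [CommSemiring R] {f g : MvPolynomial σ R} {k : ℕ}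
    (h : homogeneousComponent k (f * g) ≠ 0) :
    ∃ i j : ℕ, i + j = k ∧ homogeneousComponent i f ≠ 0 ∧ homogeneousComponent j g ≠ 0 := by
  rw [hc_mul] at h
  obtain ⟨⟨i, j⟩, hij, hne⟩ := Finset.exists_ne_zero_of_sum_ne_zero h
  rw [Finset.HasAntidiagonal.mem_antidiagonal] at hij
  exact ⟨i, j, hij, fun h0 => hne (by rw [h0]; simp), fun h0 => hne (by rw [h0]; simp)⟩
lemma isUnit_totalDegree_eq_zero [CommRing R] [IsDomain R] {u : MvPolynomial σ R}
    (h : IsUnit u) : u.totalDegree = 0 := by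
  obtain ⟨v, hv⟩ := h.exists_right_inv
  have hu : u ≠ 0 := h.ne_zero
  have hv0 : v ≠ 0 := by rintro rfl; rw [mul_zero] at hv; exact one_ne_zero hv.symm
  have key : homogeneousComponent (u.totalDegree + v.totalDegree) (u * v) ≠ 0 := by
    rw [hc_mul_top u v (fun a ha => homogeneousComponent_eq_zero a u ha)
      (fun b hb => homogeneousComponent_eq_zero b v hb)]
    exact mul_ne_zero (hc_top_ne_zero hu) (hc_top_ne_zero hv0)
  rw [hv] at key
  by_contra hne
  exact key (homogeneousComponent_eq_zero _ _ (by
    rw [totalDegree_one]; omega))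

lemma not_isUnit_of_isHomogeneous [CommRing R] [IsDomain R] {u : MvPolynomial σ R} {n : ℕ}
    (h : u.IsHomogeneous n) (hu : u ≠ 0) (hn : n ≠ 0) : ¬IsUnit u := fun hunit =>
  hn (by rw [← h.totalDegree hu]; exact isUnit_totalDegree_eq_zero hunit)

lemma prime_X0 [CommRing R] [IsDomain R] : Prime (X 0 : MvPolynomial (Fin 2) R) := by
  rw [← MulEquiv.prime_iff (MvPolynomial.finSuccEquiv R 1).toMulEquiv]
  have : (MvPolynomial.finSuccEquiv R 1).toMulEquiv (X 0) = Polynomial.X :=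
    finSuccEquiv_X_zero
  rw [this]
  exact Polynomial.prime_X

lemma prime_X1 [CommRing R] [IsDomain R] : Prime (X 1 : MvPolynomial (Fin 2) R) := by
  have := MulEquiv.prime_iff (renameEquiv R (Equiv.swap (0 : Fin 2) 1)).toMulEquiv
    (p := (X 0 : MvPolynomial (Fin 2) R))
  rw [show (renameEquiv R (Equiv.swap (0 : Fin 2) 1)).toMulEquiv (X 0) = X 1 by
    simp [renameEquiv_apply, rename_X]] at this
  exact this.mpr prime_X0

noncomputable def shearEquiv (R : Type*) [CommRing R] :
    MvPolynomial (Fin 2) R ≃ₐ[R] MvPolynomial (Fin 2) R :=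
  AlgEquiv.ofAlgHom (aeval ![X 0 - X 1, X 1]) (aeval ![X 0 + X 1, X 1])
    (by
      apply MvPolynomial.algHom_ext
      intro i
      fin_cases i <;> simp)
    (by
      apply MvPolynomial.algHom_ext
      intro i
      fin_cases i <;> simp)

lemma prime_X0_sub_X1 [CommRing R] [IsDomain R] :
    Prime (X 0 - X 1 : MvPolynomial (Fin 2) R) := by
  have := MulEquiv.prime_iff (shearEquiv R).toMulEquiv (p := (X 0 : MvPolynomial (Fin 2) R))
  rw [show (shearEquiv R).toMulEquiv (X 0) = X 0 - X 1 by
    simp [shearEquiv, AlgEquiv.ofAlgHom]] at this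
  exact this.mpr prime_X0

variable {K : Type*} [Field K]


noncomputable def polyA (K : Type*) [Field K] (t : K) : MvPolynomial (Fin 2) K :=
  C 1 * X 0 ^ 4 * X 1 ^ 0 + C (-(2 * t)) * X 0 ^ 3 * X 1 ^ 1
    + C (t ^ 2 + 4 * t - 2) * X 0 ^ 2 * X 1 ^ 2
    + C (-(2 * t)) * X 0 ^ 1 * X 1 ^ 3 + C 1 * X 0 ^ 0 * X 1 ^ 4

noncomputable def polyT (K : Type*) [Field K] (t : K) : MvPolynomial (Fin 2) K :=
  C (-t) * (X 0 * X 1 * (X 0 - X 1)) ^ 2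

lemma isHom_term (c : K) (a b : ℕ) :
    (C c * X 0 ^ a * X 1 ^ b : MvPolynomial (Fin 2) K).IsHomogeneous (a + b) := by
  have h := ((isHomogeneous_C (Fin 2) c).mul ((isHomogeneous_X K 0).pow a)).mul
    ((isHomogeneous_X K 1).pow b)
  simpa using h

lemma homA (t : K) : (polyA K t).IsHomogeneous 4 := by
  unfold polyA
  exact ((((isHom_term 1 4 0).add (isHom_term (-(2*t)) 3 1)).add
    (isHom_term (t^2+4*t-2) 2 2)).add (isHom_term (-(2*t)) 1 3)).add (isHom_term 1 0 4)

lemma homT (t : K) : (polyT K t).IsHomogeneous 6 := by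
  have h1 : ((X 0 * X 1 * (X 0 - X 1)) : MvPolynomial (Fin 2) K).IsHomogeneous 3 := by
    have := ((isHomogeneous_X K 0).mul (isHomogeneous_X K 1)).mul
      ((isHomogeneous_X K (0 : Fin 2)).sub (isHomogeneous_X K 1))
    simpa using this
  have h2 := (isHomogeneous_C (Fin 2) (-t)).mul (h1.pow 2)
  simpa [polyT] using h2

lemma hcAT (t : K) (k : ℕ) :
    homogeneousComponent k (polyA K t + polyT K t) =
      if k = 4 then polyA K t else if k = 6 then polyT K t else 0 := by
  rw [map_add, homogeneousComponent_of_mem (homA t), homogeneousComponent_of_mem (homT t)]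
  by_cases h4 : k = 4
  · simp [h4]
  · by_cases h6 : k = 6 <;> simp [h4, h6]

lemma aevalA (t : K) :
    aeval ![Polynomial.X, 1] (polyA K t) =
      Polynomial.X ^ 4 - Polynomial.C (2 * t) * Polynomial.X ^ 3
        + Polynomial.C (t ^ 2 + 4 * t - 2) * Polynomial.X ^ 2
        - Polynomial.C (2 * t) * Polynomial.X + 1 := by
  simp [polyA, Polynomial.algebraMap_eq, map_ofNat]
  ring

lemma aevalA_X0 (t : K) :
    aeval ![(0 : Polynomial K), Polynomial.X] (polyA K t) = Polynomial.X ^ 4 := by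
  simp [polyA]

lemma aevalA_X1 (t : K) :
    aeval ![Polynomial.X, (0 : Polynomial K)] (polyA K t) = Polynomial.X ^ 4 := by
  simp [polyA]

lemma aevalA_diag (t : K) :
    aeval ![Polynomial.X, Polynomial.X] (polyA K t) = Polynomial.C (t ^ 2) * Polynomial.X ^ 4 := by
  simp [polyA, Polynomial.algebraMap_eq, map_ofNat]
  ring
lemma X0_not_dvd (t : K) : ¬ (X 0 : MvPolynomial (Fin 2) K) ∣ polyA K t := by
  rintro ⟨w, hw⟩
  have := congrArg (aeval ![(0 : Polynomial K), Polynomial.X]) hw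
  rw [aevalA_X0, map_mul, aeval_X] at this
  simp only [Matrix.cons_val_zero, zero_mul] at this
  exact pow_ne_zero 4 Polynomial.X_ne_zero this

lemma X1_not_dvd (t : K) : ¬ (X 1 : MvPolynomial (Fin 2) K) ∣ polyA K t := by
  rintro ⟨w, hw⟩
  have := congrArg (aeval ![Polynomial.X, (0 : Polynomial K)]) hw
  rw [aevalA_X1, map_mul, aeval_X] at this
  simp only [Matrix.cons_val_one, Matrix.head_cons, zero_mul] at this
  exact pow_ne_zero 4 Polynomial.X_ne_zero this

lemma sub_not_dvd (t : K) (ht0 : t ≠ 0) :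
    ¬ (X 0 - X 1 : MvPolynomial (Fin 2) K) ∣ polyA K t := by
  rintro ⟨w, hw⟩
  have := congrArg (aeval (![Polynomial.X, Polynomial.X] : Fin 2 → Polynomial K)) hw
  rw [aevalA_diag, map_mul, map_sub, aeval_X, aeval_X] at this
  simp only [Matrix.cons_val_zero, Matrix.cons_val_one, Matrix.head_cons, sub_self,
    zero_mul] at this
  exact mul_ne_zero (Polynomial.C_ne_zero.mpr (pow_ne_zero 2 ht0))
    (pow_ne_zero 4 Polynomial.X_ne_zero) this

lemma common_dvd_contra (t : K) (ht0 : t ≠ 0) {u : MvPolynomial (Fin 2) K}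
    (hu0 : u ≠ 0) (hunit : ¬IsUnit u) (hA : u ∣ polyA K t) (hT : u ∣ polyT K t) : False := by
  obtain ⟨π, hπirr, hπdvd⟩ := WfDvdMonoid.exists_irreducible_factor hunit hu0
  have hπp : Prime π := (UniqueFactorizationMonoid.irreducible_iff_prime).mp hπirr
  have hdvdT : π ∣ C (-t) * (X 0 * X 1 * (X 0 - X 1)) ^ 2 := by
    rw [← polyT]; exact hπdvd.trans hT
  have hS : π ∣ X 0 * X 1 * (X 0 - X 1) := by
    rcases (hπp.dvd_mul).mp hdvdT with h | h
    · exact absurd (isUnit_of_dvd_unit h ((isUnit_iff_ne_zero.mpr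
        (neg_ne_zero.mpr ht0)).map C)) hπirr.not_isUnit
    · exact hπp.dvd_of_dvd_pow h
  have hπA : π ∣ polyA K t := hπdvd.trans hA
  rcases (hπp.dvd_mul).mp hS with h | h
  · rcases (hπp.dvd_mul).mp h with h' | h'
    · exact X0_not_dvd t ((hπp.associated_of_dvd prime_X0 h').symm.dvd.trans hπA)
    · exact X1_not_dvd t ((hπp.associated_of_dvd prime_X1 h').symm.dvd.trans hπA)
  · exact sub_not_dvd t ht0 ((hπp.associated_of_dvd prime_X0_sub_X1 h).symm.dvd.trans hπA)

lemma isUnit_of_totalDegree_zero {a : MvPolynomial (Fin 2) K} (ha : a ≠ 0)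
    (h : a.totalDegree = 0) : IsUnit a := by
  have hhom : a.IsHomogeneous 0 := (totalDegree_zero_iff_isHomogeneous (Fin 2)).mp h
  have : a = C (coeff 0 a) := by
    rw [← homogeneousComponent_zero a, homogeneousComponent_of_mem hhom, if_pos rfl]
  rw [this]
  exact (isUnit_iff_ne_zero.mpr (fun h0 => ha (by rw [this, h0, map_zero]))).map C

open MvPolynomial

set_option maxHeartbeats 1000000 in
set_option synthInstance.maxHeartbeats 400000 in
theorem stmt_14 (p : ℕ) [Fact p.Prime] (hp : 5 ≤ p)
    (τ : ZMod p) (hτ : τ ≠ 0) (hτ2 : τ ^ 2 ≠ 1) :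
    Irreducible
      (X 0 ^ 4 + X 1 ^ 4 - C ((2 : AlgebraicClosure (ZMod p)) * algebraMap (ZMod p) _ (τ ^ 2)) * X 0 ^ 3 * X 1
        + C (-2 + 4 * algebraMap (ZMod p) (AlgebraicClosure (ZMod p)) (τ ^ 2)
            + algebraMap (ZMod p) (AlgebraicClosure (ZMod p)) (τ ^ 2) ^ 2) * X 0 ^ 2 * X 1 ^ 2
        - C (algebraMap (ZMod p) (AlgebraicClosure (ZMod p)) (τ ^ 2)) * X 0 ^ 4 * X 1 ^ 2
        - C (2 * algebraMap (ZMod p) (AlgebraicClosure (ZMod p)) (τ ^ 2)) * X 0 * X 1 ^ 3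
        + C (2 * algebraMap (ZMod p) (AlgebraicClosure (ZMod p)) (τ ^ 2)) * X 0 ^ 3 * X 1 ^ 3
        - C (algebraMap (ZMod p) (AlgebraicClosure (ZMod p)) (τ ^ 2)) * X 0 ^ 2 * X 1 ^ 4 :
        MvPolynomial (Fin 2) (AlgebraicClosure (ZMod p))) := by
  classical
  set K := AlgebraicClosure (ZMod p) with hK
  haveI : UniqueFactorizationMonoid (MvPolynomial (Fin 2) K) := inferInstance
  haveI : IsIntegrallyClosed (MvPolynomial (Fin 2) K) :=
    UniqueFactorizationMonoid.instIsIntegrallyClosed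
  have hinj : Function.Injective (algebraMap (ZMod p) K) := (algebraMap (ZMod p) K).injective
  set t : K := algebraMap (ZMod p) K (τ ^ 2) with ht
  set s : K := algebraMap (ZMod p) K τ with hs
  have hst : s ^ 2 = t := by rw [hs, ht, map_pow]
  have ht0 : t ≠ 0 := fun h => pow_ne_zero 2 hτ (hinj (h.trans (map_zero _).symm))
  have hs0 : s ≠ 0 := fun h => hτ (hinj (h.trans (map_zero _).symm))
  have ht1 : t ≠ 1 := fun h => hτ2 (hinj (h.trans (map_one _).symm))
  have h2K : (2 : K) ≠ 0 := by
    have hp2 : (2 : ZMod p) ≠ 0 := by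
      have h22 : ((2 : ℕ) : ZMod p) ≠ 0 := by
        rw [Ne, ZMod.natCast_eq_zero_iff]
        intro hdvd
        have := Nat.le_of_dvd (by norm_num) hdvd
        omega
      simpa using h22
    rw [show (2 : K) = algebraMap (ZMod p) K 2 by rw [map_ofNat]]
    exact fun h => hp2 (hinj (h.trans (map_zero _).symm))
  have hG : (X 0 ^ 4 + X 1 ^ 4 - C ((2 : K) * t) * X 0 ^ 3 * X 1
        + C (-2 + 4 * t + t ^ 2) * X 0 ^ 2 * X 1 ^ 2
        - C t * X 0 ^ 4 * X 1 ^ 2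
        - C (2 * t) * X 0 * X 1 ^ 3
        + C (2 * t) * X 0 ^ 3 * X 1 ^ 3
        - C t * X 0 ^ 2 * X 1 ^ 4 :
        MvPolynomial (Fin 2) K) = polyA K t + polyT K t := by
    simp only [polyA, polyT, map_add, map_sub, map_mul, map_pow, map_neg, map_one, map_ofNat]
    ring
  rw [hG]
  -- basic nonvanishing facts
  have hA1ne : (Polynomial.X ^ 4 - Polynomial.C (2 * t) * Polynomial.X ^ 3
      + Polynomial.C (t ^ 2 + 4 * t - 2) * Polynomial.X ^ 2
      - Polynomial.C (2 * t) * Polynomial.X + 1 : Polynomial K) ≠ 0 := by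
    intro h
    have h4 := congrArg (fun q => Polynomial.coeff q 4) h
    simp only [Polynomial.coeff_add, Polynomial.coeff_sub, Polynomial.coeff_C_mul,
      Polynomial.coeff_X_pow, Polynomial.coeff_X, Polynomial.coeff_one,
      Polynomial.coeff_zero] at h4
    norm_num at h4
  have hA0 : polyA K t ≠ 0 := by
    intro h
    apply hA1ne
    rw [← aevalA t, h, map_zero]
  have hsub_ne : (X 0 - X 1 : MvPolynomial (Fin 2) K) ≠ 0 := by
    intro h
    have := congrArg (aeval (![1, 0] : Fin 2 → K)) h
    simp at this
  have hSne : (X 0 * X 1 * (X 0 - X 1) : MvPolynomial (Fin 2) K) ≠ 0 :=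
    mul_ne_zero (mul_ne_zero (X_ne_zero 0) (X_ne_zero 1)) hsub_ne
  have hT0 : polyT K t ≠ 0 := by
    rw [polyT]
    exact mul_ne_zero (by simpa using (neg_ne_zero.mpr ht0)) (pow_ne_zero 2 hSne)
  constructor
  · intro hu
    have hd0 := isUnit_totalDegree_eq_zero hu
    have h6 : homogeneousComponent 6 (polyA K t + polyT K t) = polyT K t := by
      rw [hcAT]; norm_num
    have hz := homogeneousComponent_eq_zero 6 (polyA K t + polyT K t) (by rw [hd0]; norm_num)
    rw [h6] at hz
    exact hT0 hz
  · intro a b hab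
    by_contra hcon
    push_neg at hcon
    obtain ⟨hna, hnb⟩ := hcon
    have h6' : homogeneousComponent 6 (polyA K t + polyT K t) = polyT K t := by
      rw [hcAT]; norm_num
    have h4' : homogeneousComponent 4 (polyA K t + polyT K t) = polyA K t := by
      rw [hcAT]; norm_num
    have h5' : homogeneousComponent 5 (polyA K t + polyT K t) = 0 := by
      rw [hcAT]; norm_num
    have hG0 : polyA K t + polyT K t ≠ 0 := by
      intro h
      rw [h, map_zero] at h6'
      exact hT0 h6'.symm
    have ha0 : a ≠ 0 := fun h => hG0 (by rw [hab, h, zero_mul])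
    have hb0 : b ≠ 0 := fun h => hG0 (by rw [hab, h, mul_zero])
    have hta : ∀ i, a.totalDegree < i → homogeneousComponent i a = 0 :=
      fun i hi => homogeneousComponent_eq_zero i a hi
    have htb : ∀ i, b.totalDegree < i → homogeneousComponent i b = 0 :=
      fun i hi => homogeneousComponent_eq_zero i b hi
    have htane : homogeneousComponent a.totalDegree a ≠ 0 := hc_top_ne_zero ha0
    have htbne : homogeneousComponent b.totalDegree b ≠ 0 := hc_top_ne_zero hb0
    have hEa : ∃ i, homogeneousComponent i a ≠ 0 := ⟨a.totalDegree, htane⟩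
    have hEb : ∃ i, homogeneousComponent i b ≠ 0 := ⟨b.totalDegree, htbne⟩
    set da := a.totalDegree with hda
    set db := b.totalDegree with hdb
    set ma := Nat.find hEa with hmadef
    set mb := Nat.find hEb with hmbdef
    have hmane : homogeneousComponent ma a ≠ 0 := Nat.find_spec hEa
    have hmbne : homogeneousComponent mb b ≠ 0 := Nat.find_spec hEb
    have hamin : ∀ i, i < ma → homogeneousComponent i a = 0 :=
      fun i hi => not_not.mp (Nat.find_min hEa hi)
    have hbmin : ∀ i, i < mb → homogeneousComponent i b = 0 :=
      fun i hi => not_not.mp (Nat.find_min hEb hi)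
    have hmada : ma ≤ da := by
      by_contra h
      push_neg at h
      exact hmane (hta ma h)
    have hmbdb : mb ≤ db := by
      by_contra h
      push_neg at h
      exact hmbne (htb mb h)
    have htop : homogeneousComponent (da + db) (a * b)
        = homogeneousComponent da a * homogeneousComponent db b := hc_mul_top a b hta htb
    have hbot : homogeneousComponent (ma + mb) (a * b)
        = homogeneousComponent ma a * homogeneousComponent mb b := hc_mul_bot a b hamin hbmin
    have h46top : da + db = 4 ∨ da + db = 6 := by
      by_contra h
      push_neg at h
      have h0 := hcAT t (da + db)
      rw [hab, htop, if_neg h.1, if_neg h.2] at h0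
      exact mul_ne_zero htane htbne h0
    have h46bot : ma + mb = 4 ∨ ma + mb = 6 := by
      by_contra h
      push_neg at h
      have h0 := hcAT t (ma + mb)
      rw [hab, hbot, if_neg h.1, if_neg h.2] at h0
      exact mul_ne_zero hmane hmbne h0
    have hc6 : homogeneousComponent 6 (a * b) = polyT K t := by rw [← hab, h6']
    have hc4 : homogeneousComponent 4 (a * b) = polyA K t := by rw [← hab, h4']
    obtain ⟨i, j, hij, hia, hjb⟩ := hc_mul_exists (hc6 ▸ hT0)
    have hile : i ≤ da := by
      by_contra h
      push_neg at h
      exact hia (hta i h)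
    have hjle : j ≤ db := by
      by_contra h
      push_neg at h
      exact hjb (htb j h)
    have h6sum : da + db = 6 := by omega
    obtain ⟨i', j', hij', hi'a, hj'b⟩ := hc_mul_exists (hc4 ▸ hA0)
    have hige : ma ≤ i' := by
      by_contra h
      push_neg at h
      exact hi'a (hamin i' h)
    have hjge : mb ≤ j' := by
      by_contra h
      push_neg at h
      exact hj'b (hbmin j' h)
    have h4sum : ma + mb = 4 := by omega
    have hTfact : homogeneousComponent da a * homogeneousComponent db b = polyT K t := by
      rw [← htop, h6sum, hc6]
    have hAfact : homogeneousComponent ma a * homogeneousComponent mb b = polyA K t := by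
      rw [← hbot, h4sum, hc4]
    rcases (by omega : (da = ma) ∨ (da = ma + 1 ∧ db = mb + 1) ∨ (db = mb)) with h1 | ⟨h1, h2⟩ | h1
    · -- a's top equals bottom : common divisor of A and T
      have hAdvd : homogeneousComponent ma a ∣ polyA K t := ⟨_, hAfact.symm⟩
      have hTdvd : homogeneousComponent ma a ∣ polyT K t := ⟨_, by rw [← hTfact, h1]⟩
      have hmapos : ma ≠ 0 := by
        intro h0
        exact hna (isUnit_of_totalDegree_zero ha0 (by omega))
      exact common_dvd_contra t ht0 hmane
        (not_isUnit_of_isHomogeneous (homogeneousComponent_isHomogeneous ma a) hmane hmapos)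
        hAdvd hTdvd
    · -- the square case
      have h50 : homogeneousComponent 5 (a * b) = 0 := by rw [← hab, h5']
      rw [hc_mul a b 5] at h50
      have hpairs : ({(ma, db), (da, mb)} : Finset (ℕ × ℕ)) ⊆ Finset.HasAntidiagonal.antidiagonal 5 := by
        intro x hx
        simp only [Finset.mem_insert, Finset.mem_singleton] at hx
        rcases hx with rfl | rfl <;> rw [Finset.HasAntidiagonal.mem_antidiagonal] <;> omega
      have hzero : ∀ x ∈ Finset.HasAntidiagonal.antidiagonal 5,
          x ∉ ({(ma, db), (da, mb)} : Finset (ℕ × ℕ)) →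
          homogeneousComponent x.1 a * homogeneousComponent x.2 b = 0 := by
        rintro ⟨i0, j0⟩ hmem hnot
        rw [Finset.HasAntidiagonal.mem_antidiagonal] at hmem
        simp only [Finset.mem_insert, Finset.mem_singleton, Prod.mk.injEq, not_or] at hnot
        by_cases hi1 : i0 < ma
        · rw [hamin i0 hi1, zero_mul]
        · by_cases hi2 : da < i0
          · rw [hta i0 hi2, zero_mul]
          · exfalso
            omega
      have h5eq : homogeneousComponent ma a * homogeneousComponent db b
          + homogeneousComponent da a * homogeneousComponent mb b = 0 := by
        rw [← Finset.sum_subset hpairs hzero] at h50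
        rwa [Finset.sum_insert (by simp; omega), Finset.sum_singleton] at h50
      have polyT_eq : polyT K t = -(C t * (X 0 * X 1 * (X 0 - X 1)) ^ 2) := by
        rw [polyT, map_neg]
        ring
      have hB2 : (C s * (X 0 * X 1 * (X 0 - X 1)) : MvPolynomial (Fin 2) K) ^ 2
          = C t * (X 0 * X 1 * (X 0 - X 1)) ^ 2 := by
        rw [mul_pow, ← map_pow, hst]
      have key : (homogeneousComponent da a * homogeneousComponent mb b) ^ 2
          = (C s * (X 0 * X 1 * (X 0 - X 1))) ^ 2 * polyA K t := by
        rw [hB2]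
        have eT : homogeneousComponent da a * homogeneousComponent db b
            = -(C t * (X 0 * X 1 * (X 0 - X 1)) ^ 2) := by rw [hTfact, polyT_eq]
        linear_combination (homogeneousComponent da a * homogeneousComponent mb b) * h5eq
          - (homogeneousComponent ma a * homogeneousComponent mb b) * eT
          + (C t * (X 0 * X 1 * (X 0 - X 1)) ^ 2) * hAfact
      have hBne : (C s * (X 0 * X 1 * (X 0 - X 1)) : MvPolynomial (Fin 2) K) ≠ 0 :=
        mul_ne_zero (by simpa using hs0) hSne
      have hdvd : (C s * (X 0 * X 1 * (X 0 - X 1)) : MvPolynomial (Fin 2) K)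
          ∣ homogeneousComponent da a * homogeneousComponent mb b :=
        (IsIntegrallyClosed.pow_dvd_pow_iff (two_ne_zero)).mp ⟨_, key⟩
      obtain ⟨c, hcval⟩ := hdvd
      have hA_sq : polyA K t = c ^ 2 := by
        refine mul_left_cancel₀ (pow_ne_zero 2 hBne) ?_
        rw [← key, hcval]
        ring
      have hfin := congrArg (aeval (![Polynomial.X, 1] : Fin 2 → Polynomial K)) hA_sq
      rw [aevalA, map_pow] at hfin
      exact sq_contra t h2K ht0 ht1 _ hfin.symm
    · -- b's top equals bottom
      have hAdvd : homogeneousComponent mb b ∣ polyA K t := ⟨_, by rw [← hAfact]; ring⟩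
      have hTdvd : homogeneousComponent mb b ∣ polyT K t := ⟨_, by rw [← hTfact, h1]; ring⟩
      have hmbpos : mb ≠ 0 := by
        intro h0
        exact hnb (isUnit_of_totalDegree_zero hb0 (by omega))
      exact common_dvd_contra t ht0 hmbne
        (not_isUnit_of_isHomogeneous (homogeneousComponent_isHomogeneous mb b) hmbne hmbpos)
        hAdvd hTdvd
end
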